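/- arXiv:2106.02114 — 6 statements merged into one kernel-verified Lean document; each statement's English description precedes it below -/
import Mathlib

section
/- Let G be a finite simple graph with at least one edge and let s be a vertex of G. If s is covered by every maximum matching of G, then s has a neighbor v such that some maximum matching of G − s does not cover v. -/
/-- `mex S` is the least natural number not in `S`. -/
noncomputable def mex (s : Finset ℕ) : ℕ := sInf {n : ℕ | n ∉ s}

/-- The Undirected Geography Grundy value for the graph `G`, played on the set `A` of
remaining vertices (i.e. on the induced subgraph `G[A]`) with the token on `s`:
`g(A,s) = mex { g(A − s, v) : v ∈ A − s adjacent to s }`. -/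
noncomputable def geo {V : Type} [DecidableEq V] (G : SimpleGraph V) [DecidableRel G.Adj]
    (A : Finset V) (s : V) : ℕ :=
  if h : s ∈ A then
    mex (((A.erase s).filter (fun v => G.Adj s v)).image (fun v => geo G (A.erase s) v))
  else 0
termination_by A.card
decreasing_by
  simp_wf
  exact Finset.card_erase_lt_of_mem h

/-- `M` is a maximum matching of the induced subgraph of `G` on the vertex set `B`:
`M` is a matching, its vertex set lies in `B`, and no matching inside `B` covers more
vertices (equivalently, has more edges). -/
def IsMaxMatchingOn {V : Type} (G : SimpleGraph V) (B : Set V) (M : G.Subgraph) : Prop :=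
  M.IsMatching ∧ M.verts ⊆ B ∧
    ∀ M' : G.Subgraph, M'.IsMatching → M'.verts ⊆ B → M'.verts.ncard ≤ M.verts.ncard

/-- A matching `M` covers the vertex `s` iff `s` is one of its matched vertices. -/
def MatchingCovers {V : Type} {G : SimpleGraph V} (M : G.Subgraph) (s : V) : Prop :=
  s ∈ M.verts

lemma even_ncard_of_matching {V : Type} [Fintype V] {G : SimpleGraph V} {M : G.Subgraph}
    (h : M.IsMatching) : Even M.verts.ncard := by
  classical
  have : Fintype M.verts := Fintype.ofFinite _
  have := h.even_card
  rwa [Set.ncard_eq_toFinset_card']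

lemma exists_max_matching {V : Type} [Fintype V] (G : SimpleGraph V) :
    ∃ M : G.Subgraph, M.IsMatching ∧
      ∀ N : G.Subgraph, N.IsMatching → N.verts.ncard ≤ M.verts.ncard := by
  classical
  set S : Set ℕ := {n | ∃ M : G.Subgraph, M.IsMatching ∧ M.verts.ncard = n} with hS
  have hne : S.Nonempty := ⟨0, ⊥, fun v hv => by simp at hv, by simp⟩
  have hbdd : BddAbove S := by
    refine ⟨Fintype.card V, fun n hn => ?_⟩
    obtain ⟨M, -, rfl⟩ := hn
    simpa [Set.ncard_univ] using Set.ncard_le_ncard (Set.subset_univ M.verts) Set.finite_univ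
  obtain ⟨M, hM, hcard⟩ := Nat.sSup_mem hne hbdd
  exact ⟨M, hM, fun N hN => hcard ▸ le_csSup hbdd ⟨N, hN, rfl⟩⟩

lemma matching_delete {V : Type} {G : SimpleGraph V} {M : G.Subgraph} (h : M.IsMatching)
    {s v : V} (hsv : M.Adj s v) : (M.deleteVerts {s, v}).IsMatching := by
  intro w hw
  rw [SimpleGraph.Subgraph.deleteVerts_verts] at hw
  obtain ⟨hwM, hw2⟩ := hw
  simp only [Set.mem_insert_iff, Set.mem_singleton_iff, not_or] at hw2
  obtain ⟨u, hwu, huniq⟩ := h hwM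
  have hus : u ≠ s := by
    rintro rfl
    obtain ⟨v', hv', hvuniq⟩ := h (M.edge_vert hsv)
    have h1 := hvuniq _ hsv
    have h2 := hvuniq _ hwu.symm
    exact hw2.2 (h2.trans h1.symm) |>.elim
  have huv : u ≠ v := by
    rintro rfl
    obtain ⟨v', hv', hvuniq⟩ := h (M.edge_vert hsv.symm)
    have h1 := hvuniq _ hsv.symm
    have h2 := hvuniq _ hwu.symm
    exact hw2.1 (h2.trans h1.symm) |>.elim
  refine ⟨u, ?_, ?_⟩
  · show (M.deleteVerts {s, v}).Adj w u
    rw [SimpleGraph.Subgraph.deleteVerts_adj]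
    simp [hwM, hw2.1, hw2.2, M.edge_vert hwu.symm, hus, huv, hwu]
  · intro y hy
    have hy' : (M.deleteVerts {s, v}).Adj w y := hy
    rw [SimpleGraph.Subgraph.deleteVerts_adj] at hy'
    exact huniq y hy'.2.2.2.2

/-- if `G` has at least one edge and `s` is covered by every maximum matching
of `G`, then `s` has a neighbor `v` such that some maximum matching of `G − s`
does not cover `v`. -/
theorem stmt1 {V : Type} [Fintype V] [DecidableEq V]
    (G : SimpleGraph V) [DecidableRel G.Adj]
    (hE : ∃ u v : V, G.Adj u v) (s : V)
    (hs : ∀ M : G.Subgraph, IsMaxMatchingOn G Set.univ M → MatchingCovers M s) :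
    ∃ v : V, G.Adj s v ∧
      ∃ M : G.Subgraph, IsMaxMatchingOn G {s}ᶜ M ∧ ¬ MatchingCovers M v := by
  classical
  obtain ⟨M, hM, hmax⟩ := exists_max_matching G
  have hsM : s ∈ M.verts := hs M ⟨hM, Set.subset_univ _, fun N hN _ => hmax N hN⟩
  obtain ⟨v, hsv, -⟩ := hM hsM
  have hGsv : G.Adj s v := M.adj_sub hsv
  have hne : s ≠ v := hGsv.ne
  have hvM : v ∈ M.verts := M.edge_vert hsv.symm
  have hsub : ({s, v} : Set V) ⊆ M.verts := by
    rintro x (rfl | rfl)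
    · exact hsM
    · exact hvM
  have hcard2 : ({s, v} : Set V).ncard = 2 := Set.ncard_pair hne
  have hMcard : 2 ≤ M.verts.ncard := by
    calc 2 = ({s, v} : Set V).ncard := hcard2.symm
    _ ≤ M.verts.ncard := Set.ncard_le_ncard hsub M.verts.toFinite
  set M' := M.deleteVerts {s, v} with hM'def
  have hM'verts : M'.verts = M.verts \ {s, v} := rfl
  have hM'card : M'.verts.ncard = M.verts.ncard - 2 := by
    rw [hM'verts, Set.ncard_diff hsub, hcard2]
  refine ⟨v, hGsv, M', ⟨matching_delete hM hsv, ?_, ?_⟩, ?_⟩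
  · rw [hM'verts]
    intro x hx
    simp only [Set.mem_diff, Set.mem_insert_iff, Set.mem_singleton_iff, not_or] at hx
    simpa using hx.2.1
  · intro N hN hNsub
    by_contra hlt
    push_neg at hlt
    rw [hM'card] at hlt
    obtain ⟨a, ha⟩ := even_ncard_of_matching hM
    obtain ⟨b, hb⟩ := even_ncard_of_matching hN
    have hNM : M.verts.ncard ≤ N.verts.ncard := by omega
    have hNmax : IsMaxMatchingOn G Set.univ N :=
      ⟨hN, Set.subset_univ _, fun K hK _ => le_trans (hmax K hK) hNM⟩
    have := hs N hNmax
    have := hNsub this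
    simp at this
  · intro hv
    rw [MatchingCovers, hM'verts] at hv
    simp at hv
end

section
/- Let G be a finite simple graph and let s be a vertex of G. If some maximum matching of G does not cover s, then either s has no neighbor in G, or every maximum matching of G − s covers every neighbor of s in G. -/
/-- if some maximum matching of `G` does not cover `s`, then either `s` has
no neighbor in `G`, or every maximum matching of `G − s` covers every neighbor of `s`. -/
theorem stmt2 {V : Type} [Fintype V] [DecidableEq V]
    (G : SimpleGraph V) [DecidableRel G.Adj] (s : V)
    (h : ∃ M : G.Subgraph, IsMaxMatchingOn G Set.univ M ∧ ¬ MatchingCovers M s) :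
    (∀ v : V, ¬ G.Adj s v) ∨
      (∀ M : G.Subgraph, IsMaxMatchingOn G {s}ᶜ M →
        ∀ v : V, G.Adj s v → MatchingCovers M v) := by
  obtain ⟨M, ⟨hMmat, -, hMmax⟩, hMs⟩ := h
  right
  rintro M' ⟨hM'mat, hM'sub, hM'max⟩ v hadj
  by_contra hcov
  have hsM' : s ∉ M'.verts := fun hs => (hM'sub hs) rfl
  -- M ≤ M' in size
  have hMsub : M.verts ⊆ {s}ᶜ := fun x hx hxs => hMs (hxs ▸ hx)
  have h1 : M.verts.ncard ≤ M'.verts.ncard := hM'max M hMmat hMsub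
  -- new matching
  set E := G.subgraphOfAdj hadj with hE
  have hEmat : E.IsMatching := SimpleGraph.Subgraph.IsMatching.subgraphOfAdj hadj
  have hdisj : Disjoint M'.support E.support := by
    rw [hM'mat.support_eq_verts, hEmat.support_eq_verts]
    rw [Set.disjoint_right]
    intro x hx
    simp only [hE, SimpleGraph.subgraphOfAdj_verts, Set.mem_insert_iff,
      Set.mem_singleton_iff] at hx
    rcases hx with rfl | rfl
    · exact hsM'
    · exact hcov
  have hM''mat : (M' ⊔ E).IsMatching := hM'mat.sup hEmat hdisj
  have h2 : (M' ⊔ E).verts.ncard ≤ M.verts.ncard :=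
    hMmax _ hM''mat (Set.subset_univ _)
  have hverts : (M' ⊔ E).verts = insert s (insert v M'.verts) := by
    simp only [SimpleGraph.Subgraph.verts_sup, hE, SimpleGraph.subgraphOfAdj_verts]
    rw [Set.union_comm]
    rw [Set.insert_union, Set.singleton_union]
  have hvne : v ∉ insert v M'.verts → False := by simp
  have hcard : (M' ⊔ E).verts.ncard = M'.verts.ncard + 2 := by
    rw [hverts]
    rw [Set.ncard_insert_of_notMem (by
      simp only [Set.mem_insert_iff]
      rintro (rfl | hs)
      · exact hadj.ne rfl
      · exact hsM' hs) (Set.toFinite _)]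
    rw [Set.ncard_insert_of_notMem hcov (Set.toFinite _)]
  omega
end

section
/- Let G be a finite simple graph with at least one edge and let s be a vertex of G that is covered by every maximum matching of G. Then for any maximum matching M of G, writing {s,w} for the edge of M incident to s, we have: M \ {{s,w}} is a maximum matching of G − s, and g(G − s, w) = 0 (i.e., moving the token from s to w is a winning move in Undirected Geography). -/
lemma mex_eq_zero_iff (s : Finset ℕ) : mex s = 0 ↔ 0 ∉ s := by
  constructor
  · intro h h0
    rcases Nat.sInf_eq_zero.mp h with h1 | h1
    · exact h1 h0
    · obtain ⟨n, hn⟩ := s.exists_notMem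
      exact (Set.eq_empty_iff_forall_notMem.mp h1 n) hn
  · intro h
    exact Nat.sInf_eq_zero.mpr (Or.inl h)

section helpers
set_option linter.unusedSectionVars false
variable {V : Type} [Fintype V] [DecidableEq V] {G : SimpleGraph V}

lemma matching_even_ncard {M : G.Subgraph} (hm : M.IsMatching) : Even M.verts.ncard := by
  haveI : Fintype M.verts := Fintype.ofFinite _
  rw [Set.ncard_eq_toFinset_card']
  exact hm.even_card

lemma matching_deleteVerts {M : G.Subgraph} (hm : M.IsMatching) {t w : V} (hadj : M.Adj t w) :
    (M.deleteVerts {t, w}).IsMatching := by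
  intro v hv
  rw [SimpleGraph.Subgraph.deleteVerts_verts] at hv
  obtain ⟨hvM, hvtw⟩ := hv
  obtain ⟨u, hu, huniq⟩ := hm hvM
  have hvt : v ≠ t := fun h => hvtw (by simp [h])
  have hvw : v ≠ w := fun h => hvtw (by simp [h])
  have hut : u ≠ t := by
    rintro rfl
    obtain ⟨x, hx, hxu⟩ := hm (M.edge_vert hadj)
    exact hvw ((hxu v hu.symm).trans (hxu w hadj).symm)
  have huw : u ≠ w := by
    rintro rfl
    obtain ⟨x, hx, hxu⟩ := hm (M.edge_vert hadj.symm)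
    exact hvt ((hxu v hu.symm).trans (hxu t hadj.symm).symm)
  refine ⟨u, ?_, ?_⟩
  · show (M.deleteVerts {t, w}).Adj v u
    rw [SimpleGraph.Subgraph.deleteVerts_adj]
    exact ⟨hvM, by simp [hvt, hvw], M.edge_vert hu.symm, by simp [hut, huw], hu⟩
  · intro y hy
    exact huniq y ((SimpleGraph.Subgraph.deleteVerts_adj).mp hy).2.2.2.2

lemma matching_sup_edge {N : G.Subgraph} (hN : N.IsMatching) {t v : V} (h : G.Adj t v)
    (ht : t ∉ N.verts) (hv : v ∉ N.verts) :
    (N ⊔ G.subgraphOfAdj h).IsMatching ∧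
      (N ⊔ G.subgraphOfAdj h).verts = N.verts ∪ {t, v} ∧
      (N ⊔ G.subgraphOfAdj h).verts.ncard = N.verts.ncard + 2 := by
  have hdv : Disjoint N.verts ({t, v} : Set V) := by
    rw [Set.disjoint_left]
    rintro x hx (rfl | rfl)
    · exact ht hx
    · exact hv hx
  have hd : Disjoint N.support (G.subgraphOfAdj h).support := by
    rw [hN.support_eq_verts]
    refine Set.disjoint_of_subset_right ?_ hdv
    intro x hx
    have := SimpleGraph.Subgraph.support_subset_verts _ hx
    rwa [SimpleGraph.subgraphOfAdj_verts] at this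
  refine ⟨hN.sup (SimpleGraph.Subgraph.IsMatching.subgraphOfAdj h) hd, ?_, ?_⟩
  · simp [SimpleGraph.Subgraph.verts_sup]
  · rw [SimpleGraph.Subgraph.verts_sup, SimpleGraph.subgraphOfAdj_verts,
      Set.ncard_union_eq hdv (Set.toFinite _) (Set.toFinite _),
      Set.ncard_pair (G.ne_of_adj h)]

lemma exists_max (G : SimpleGraph V) (B : Set V) : ∃ M, IsMaxMatchingOn G B M := by
  set S : Set ℕ := {n | ∃ M : G.Subgraph, M.IsMatching ∧ M.verts ⊆ B ∧ M.verts.ncard = n} with hS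
  have hne : S.Nonempty := by
    refine ⟨0, ⊥, ?_, ?_, ?_⟩
    · intro v hv
      simp [SimpleGraph.Subgraph.verts_bot] at hv
    · simp [SimpleGraph.Subgraph.verts_bot]
    · simp [SimpleGraph.Subgraph.verts_bot]
  have hbdd : BddAbove S := by
    refine ⟨Fintype.card V, ?_⟩
    rintro n ⟨M, _, _, rfl⟩
    calc M.verts.ncard ≤ (Set.univ : Set V).ncard :=
          Set.ncard_le_ncard (Set.subset_univ _) Set.finite_univ
      _ = Fintype.card V := by rw [Set.ncard_univ, Nat.card_eq_fintype_card]
  obtain ⟨M, hm, hb, hcard⟩ := Nat.sSup_mem hne hbdd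
  refine ⟨M, hm, hb, ?_⟩
  intro M' hm' hb'
  rw [hcard]
  exact le_csSup hbdd ⟨M', hm', hb', rfl⟩

lemma even_lt_even {a b : ℕ} (ha : Even a) (hb : Even b) (h : a < b) : a + 2 ≤ b := by
  obtain ⟨x, rfl⟩ := ha; obtain ⟨y, rfl⟩ := hb; omega

variable (G)
variable [DecidableRel G.Adj]

lemma geo_zero_iff (A : Finset V) :
    ∀ t ∈ A, (geo G A t = 0 ↔ ∃ M : G.Subgraph, IsMaxMatchingOn G ↑A M ∧ t ∉ M.verts) := by
  induction A using Finset.strongInduction with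
  | _ A ih =>
  intro t ht
  rw [geo, dif_pos ht, mex_eq_zero_iff]
  have hIH := ih (A.erase t) (Finset.erase_ssubset ht)
  have hmem : (0 ∉ ((A.erase t).filter (fun v => G.Adj t v)).image
      (fun v => geo G (A.erase t) v)) ↔
      ∀ v ∈ A.erase t, G.Adj t v → geo G (A.erase t) v ≠ 0 := by
    simp only [Finset.mem_image, Finset.mem_filter, not_exists, not_and]
    constructor
    · intro h v hv hadj h0
      exact h v ⟨hv, hadj⟩ h0
    · intro h v hv h0
      exact h v hv.1 hv.2 h0
  rw [hmem]
  constructor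
  · -- every successor nonzero → ∃ max matching avoiding t
    intro hall
    obtain ⟨M, hMm, hMb, hMmax⟩ := exists_max G (↑A : Set V)
    by_cases htM : t ∈ M.verts
    · -- t matched to some u; delete {t,u}
      obtain ⟨u, hu, -⟩ := hMm htM
      have hGtu : G.Adj t u := M.adj_sub hu
      have huA : u ∈ A := hMb (M.edge_vert hu.symm)
      have huet : u ∈ A.erase t := Finset.mem_erase.mpr ⟨(G.ne_of_adj hGtu).symm, huA⟩
      by_cases hex : ∃ N : G.Subgraph, N.IsMatching ∧ N.verts ⊆ ↑(A.erase t) ∧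
          N.verts.ncard = M.verts.ncard
      · obtain ⟨N, hNm, hNb, hNc⟩ := hex
        have hNbA : N.verts ⊆ (↑A : Set V) := by
          intro x hx
          have := hNb hx
          simp only [Finset.coe_erase, Set.mem_diff] at this
          exact this.1
        refine ⟨N, ⟨hNm, hNbA, ?_⟩, ?_⟩
        · intro M'' hm'' hb''
          rw [hNc]; exact hMmax M'' hm'' hb''
        · intro hcon
          have := hNb hcon
          simp at this
      · -- no matching on A.erase t of full size: deleteVerts {t,u} is max there, contradicting hall u
        exfalso
        set M' := M.deleteVerts {t, u} with hM'
        have hM'm : M'.IsMatching := matching_deleteVerts hMm hu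
        have hM'v : M'.verts = M.verts \ {t, u} := SimpleGraph.Subgraph.deleteVerts_verts
        have hsub : ({t, u} : Set V) ⊆ M.verts := by
          rintro x (rfl | rfl)
          · exact htM
          · exact M.edge_vert hu.symm
        have h2 : ({t, u} : Set V).ncard = 2 := Set.ncard_pair (G.ne_of_adj hGtu)
        have hle2 : 2 ≤ M.verts.ncard := by
          rw [← h2]; exact Set.ncard_le_ncard hsub (Set.toFinite _)
        have hM'c : M'.verts.ncard = M.verts.ncard - 2 := by
          rw [hM'v, Set.ncard_diff hsub (Set.toFinite _), h2]
        have hbound : ∀ N : G.Subgraph, N.IsMatching → N.verts ⊆ ↑(A.erase t) →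
            N.verts.ncard ≤ M.verts.ncard - 2 := by
          intro N hNm hNb
          have hNbA : N.verts ⊆ (↑A : Set V) := by
            intro x hx
            have := hNb hx
            simp only [Finset.coe_erase, Set.mem_diff] at this
            exact this.1
          have hle := hMmax N hNm hNbA
          have hlt : N.verts.ncard < M.verts.ncard := by
            rcases lt_or_eq_of_le hle with h | h
            · exact h
            · exact absurd ⟨N, hNm, hNb, h⟩ hex
          have := even_lt_even (matching_even_ncard hNm) (matching_even_ncard hMm) hlt
          omega
        have hM'b : M'.verts ⊆ ↑(A.erase t) := by
          intro x hx
          rw [hM'v] at hx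
          simp only [Finset.coe_erase, Set.mem_diff, Set.mem_singleton_iff]
          refine ⟨hMb hx.1, ?_⟩
          intro hxt
          exact hx.2 (by simp [hxt])
        have hmax' : IsMaxMatchingOn G ↑(A.erase t) M' := by
          refine ⟨hM'm, hM'b, ?_⟩
          intro N hNm hNb
          rw [hM'c]
          exact hbound N hNm hNb
        have huM' : u ∉ M'.verts := by
          rw [hM'v]
          intro hx
          exact hx.2 (by simp)
        exact hall u huet hGtu (((hIH u huet).mpr ⟨M', hmax', huM'⟩))
    · exact ⟨M, ⟨hMm, hMb, hMmax⟩, htM⟩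
  · -- ∃ max matching avoiding t → every successor nonzero
    rintro ⟨M, ⟨hMm, hMb, hMmax⟩, htM⟩ v hv hadj h0
    obtain ⟨N, ⟨hNm, hNb, hNmax⟩, hvN⟩ := (hIH v hv).mp h0
    have htN : t ∉ N.verts := by
      intro h
      have := hNb h
      simp at this
    obtain ⟨hEm, hEv, hEc⟩ := matching_sup_edge hNm hadj htN hvN
    have hEb : (N ⊔ G.subgraphOfAdj hadj).verts ⊆ (↑A : Set V) := by
      rw [hEv]
      rintro x (hx | hx)
      · have := hNb hx
        simp only [Finset.coe_erase, Set.mem_diff] at this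
        exact this.1
      · rcases hx with rfl | rfl
        · exact_mod_cast ht
        · exact_mod_cast Finset.mem_of_mem_erase hv
    -- M itself is a matching on A.erase t
    have hMb' : M.verts ⊆ ↑(A.erase t) := by
      intro x hx
      simp only [Finset.coe_erase, Set.mem_diff, Set.mem_singleton_iff]
      exact ⟨hMb hx, fun h => htM (h ▸ hx)⟩
    have h1 : M.verts.ncard ≤ N.verts.ncard := hNmax M hMm hMb'
    have h2 : (N ⊔ G.subgraphOfAdj hadj).verts.ncard ≤ M.verts.ncard :=
      hMmax _ hEm hEb
    omega

end helpers

/-- suppose `G` has at least one edge and `s` is covered by every maximum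
matching of `G`.  If `M` is any maximum matching of `G` and `{s,w}` is the edge of `M`
incident to `s` (i.e. `M.Adj s w`), then `M` minus the edge `{s,w}` (realized as
`M.deleteVerts {s,w}`, since the only `M`-edge at `s` or `w` is `{s,w}`) is a maximum
matching of `G − s`, and `g(G − s, w) = 0`, i.e. moving the token from `s` to `w` is a
winning move in Undirected Geography. -/
theorem stmt3 {V : Type} [Fintype V] [DecidableEq V]
    (G : SimpleGraph V) [DecidableRel G.Adj]
    (hE : ∃ u v : V, G.Adj u v) (s : V)
    (hs : ∀ M : G.Subgraph, IsMaxMatchingOn G Set.univ M → MatchingCovers M s)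
    (M : G.Subgraph) (hM : IsMaxMatchingOn G Set.univ M)
    (w : V) (hw : M.Adj s w) :
    IsMaxMatchingOn G {s}ᶜ (M.deleteVerts {s, w}) ∧
      geo G (Finset.univ.erase s) w = 0 := by
  obtain ⟨hMm, hMb, hMmax⟩ := hM
  have hGsw : G.Adj s w := M.adj_sub hw
  have hne : s ≠ w := G.ne_of_adj hGsw
  have hsM : s ∈ M.verts := M.edge_vert hw
  have hwM : w ∈ M.verts := M.edge_vert hw.symm
  set M' := M.deleteVerts {s, w} with hM'def
  have hM'm : M'.IsMatching := matching_deleteVerts hMm hw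
  have hM'v : M'.verts = M.verts \ {s, w} := SimpleGraph.Subgraph.deleteVerts_verts
  have hsub : ({s, w} : Set V) ⊆ M.verts := by
    rintro x (rfl | rfl)
    · exact hsM
    · exact hwM
  have h2 : ({s, w} : Set V).ncard = 2 := Set.ncard_pair hne
  have hle2 : 2 ≤ M.verts.ncard := by
    rw [← h2]; exact Set.ncard_le_ncard hsub (Set.toFinite _)
  have hM'c : M'.verts.ncard = M.verts.ncard - 2 := by
    rw [hM'v, Set.ncard_diff hsub (Set.toFinite _), h2]
  have hbound : ∀ N : G.Subgraph, N.IsMatching → N.verts ⊆ ({s}ᶜ : Set V) →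
      N.verts.ncard ≤ M.verts.ncard - 2 := by
    intro N hNm hNb
    have hle := hMmax N hNm (Set.subset_univ _)
    have hlt : N.verts.ncard < M.verts.ncard := by
      rcases lt_or_eq_of_le hle with h | h
      · exact h
      · exfalso
        have hsN : s ∈ N.verts :=
          hs N ⟨hNm, Set.subset_univ _, fun M'' hm'' hb'' => h ▸ hMmax M'' hm'' hb''⟩
        exact (hNb hsN) rfl
    have := even_lt_even (matching_even_ncard hNm) (matching_even_ncard hMm) hlt
    omega
  have hM'b : M'.verts ⊆ ({s}ᶜ : Set V) := by
    intro x hx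
    rw [hM'v] at hx
    intro hxs
    rw [Set.mem_singleton_iff] at hxs
    exact hx.2 (by simp [hxs])
  refine ⟨⟨hM'm, hM'b, fun N hNm hNb => by rw [hM'c]; exact hbound N hNm hNb⟩, ?_⟩
  have hwmem : w ∈ Finset.univ.erase s := Finset.mem_erase.mpr ⟨hne.symm, Finset.mem_univ w⟩
  apply (geo_zero_iff G (Finset.univ.erase s) w hwmem).mpr
  have hcoe : (↑(Finset.univ.erase s) : Set V) = ({s}ᶜ : Set V) := by
    ext x; simp [eq_comm]
  refine ⟨M', ⟨hM'm, ?_, ?_⟩, ?_⟩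
  · rw [hcoe]; exact hM'b
  · intro N hNm hNb
    rw [hM'c]
    exact hbound N hNm (hcoe ▸ hNb)
  · rw [hM'v]
    rintro ⟨-, hcon⟩
    exact hcon (by simp)
end

section
/- For every natural number n, the Undirected Geography position consisting of the tree t(n) with the token on its root has Grundy value exactly n; moreover t(n) has exactly 2^n vertices and its root has degree n. -/
/-- Parent-child relation of the binomial trees: `T` is a child of `S` iff `T` is obtained
from `S` by inserting a new element larger than everything in `S`. -/
def treeRel (S T : Finset ℕ) : Prop :=
  ∃ k ∈ T, k ∉ S ∧ (∀ j ∈ S, j < k) ∧ T = insert k S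

instance : DecidableRel treeRel := fun S T => by
  unfold treeRel; infer_instance

/-- The universal tree graph: its induced subgraph on the powerset of `range n` is
(an isomorphic copy of) the recursively defined tree `t(n)`, rooted at `∅`,
where the root of `t(n)` is joined to the roots of copies of `t(0), …, t(n−1)`. -/
def treeGraph : SimpleGraph (Finset ℕ) where
  Adj S T := S ≠ T ∧ (treeRel S T ∨ treeRel T S)
  symm := ⟨fun S T h => ⟨h.1.symm, h.2.symm⟩⟩
  loopless := ⟨fun S h => h.1 rfl⟩

instance : DecidableRel treeGraph.Adj := fun S T =>
  inferInstanceAs (Decidable (S ≠ T ∧ (treeRel S T ∨ treeRel T S)))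


lemma mex_range (n : ℕ) : mex (Finset.range n) = n := by
  unfold mex
  have h : {m : ℕ | m ∉ Finset.range n} = {m | n ≤ m} := by
    ext m; simp [Finset.mem_range, not_lt]
  rw [h]
  exact le_antisymm (Nat.sInf_le (by simp)) (le_csInf ⟨n, by simp⟩ fun m hm => hm)

lemma geo_def {V : Type} [DecidableEq V] (G : SimpleGraph V) [DecidableRel G.Adj]
    (A : Finset V) (s : V) :
    geo G A s = if _ : s ∈ A then
      mex (((A.erase s).filter (fun v => G.Adj s v)).image (fun v => geo G (A.erase s) v))
    else 0 := by
  rw [geo]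

lemma geo_closed_aux (n : ℕ) : ∀ {V : Type} [DecidableEq V] (G : SimpleGraph V)
    [DecidableRel G.Adj] (A A' : Finset V), A.card ≤ n → A' ⊆ A →
    (∀ v ∈ A', ∀ w ∈ A, G.Adj v w → w ∈ A') → ∀ s ∈ A', geo G A s = geo G A' s := by
  induction n with
  | zero =>
    intro V _ G _ A A' hcard hsub _ s hs
    exact absurd (Finset.card_pos.mpr ⟨s, hsub hs⟩) (by omega)
  | succ n ih =>
    intro V _ G _ A A' hcard hsub hcl s hs
    have hsA : s ∈ A := hsub hs
    rw [geo_def, geo_def, dif_pos hsA, dif_pos hs]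
    have hfe : (A.erase s).filter (fun v => G.Adj s v)
        = (A'.erase s).filter (fun v => G.Adj s v) := by
      ext w
      simp only [Finset.mem_filter, Finset.mem_erase]
      constructor
      · rintro ⟨⟨hw1, hw2⟩, hw3⟩
        exact ⟨⟨hw1, hcl s hs w hw2 hw3⟩, hw3⟩
      · rintro ⟨⟨hw1, hw2⟩, hw3⟩
        exact ⟨⟨hw1, hsub hw2⟩, hw3⟩
    rw [hfe]
    congr 1
    apply Finset.image_congr
    intro v hv
    simp only [Finset.coe_filter, Set.mem_setOf_eq, Finset.mem_erase] at hv
    refine ih G (A.erase s) (A'.erase s) ?_ (Finset.erase_subset_erase s hsub) ?_ v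
      (Finset.mem_erase.mpr ⟨hv.1.1, hv.1.2⟩)
    · have := Finset.card_erase_lt_of_mem hsA; omega
    · intro x hx w hw hadj
      rcases Finset.mem_erase.mp hx with ⟨hxs, hxA'⟩
      rcases Finset.mem_erase.mp hw with ⟨hws, hwA⟩
      exact Finset.mem_erase.mpr ⟨hws, hcl x hxA' w hwA hadj⟩

lemma geo_closed {V : Type} [DecidableEq V] (G : SimpleGraph V) [DecidableRel G.Adj]
    {A A' : Finset V} (hsub : A' ⊆ A)
    (hcl : ∀ v ∈ A', ∀ w ∈ A, G.Adj v w → w ∈ A') {s : V} (hs : s ∈ A') :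
    geo G A s = geo G A' s :=
  geo_closed_aux A.card G A A' le_rfl hsub hcl s hs

lemma geo_map_aux (n : ℕ) : ∀ {V : Type} [DecidableEq V] (G : SimpleGraph V)
    [DecidableRel G.Adj] (f : V → V) (A : Finset V), A.card ≤ n →
    (∀ v w : V, f v = f w → v = w) →
    (∀ v w : V, G.Adj v w ↔ G.Adj (f v) (f w)) →
    ∀ s ∈ A, geo G (A.image f) (f s) = geo G A s := by
  induction n with
  | zero =>
    intro V _ G _ f A hcard _ _ s hs
    exact absurd (Finset.card_pos.mpr ⟨s, hs⟩) (by omega)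
  | succ n ih =>
    intro V _ G _ f A hcard hinj hadj s hs
    have hinjOn : ∀ (B : Finset V), Set.InjOn f B := fun B x _ y _ h => hinj x y h
    have hsA : f s ∈ A.image f := Finset.mem_image_of_mem f hs
    rw [geo_def, geo_def, dif_pos hsA, dif_pos hs]
    have herase : (A.image f).erase (f s) = (A.erase s).image f := by
      exact (Finset.image_erase (fun a b => hinj a b) A s).symm
    have hfilter : ((A.image f).erase (f s)).filter (fun v => G.Adj (f s) v)
        = ((A.erase s).filter (fun v => G.Adj s v)).image f := by
      rw [herase]
      ext w
      simp only [Finset.mem_filter, Finset.mem_image]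
      constructor
      · rintro ⟨⟨v, hv, rfl⟩, hadj'⟩
        exact ⟨v, ⟨hv, (hadj s v).mpr hadj'⟩, rfl⟩
      · rintro ⟨v, ⟨hv, hadj'⟩, rfl⟩
        exact ⟨⟨v, hv, rfl⟩, (hadj s v).mp hadj'⟩
    rw [hfilter, herase, Finset.image_image]
    congr 1
    apply Finset.image_congr
    intro v hv
    simp only [Finset.coe_filter, Set.mem_setOf_eq] at hv
    exact ih G f (A.erase s) (by have := Finset.card_erase_lt_of_mem hs; omega)
      hinj hadj v hv.1

lemma geo_map {V : Type} [DecidableEq V] (G : SimpleGraph V) [DecidableRel G.Adj]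
    (f : V → V) (A : Finset V)
    (hinj : ∀ v w : V, f v = f w → v = w)
    (hadj : ∀ v w : V, G.Adj v w ↔ G.Adj (f v) (f w))
    {s : V} (hs : s ∈ A) : geo G (A.image f) (f s) = geo G A s :=
  geo_map_aux A.card G f A le_rfl hinj hadj s hs

def fshift (k : ℕ) (T : Finset ℕ) : Finset ℕ := insert k (T.image (· + (k+1)))

lemma fshift_recover (k : ℕ) (T : Finset ℕ) :
    ((fshift k T).erase k).image (fun m => m - (k+1)) = T := by
  have hk : k ∉ T.image (· + (k+1)) := by simp; omega
  rw [fshift, Finset.erase_insert hk, Finset.image_image]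
  have : ∀ x ∈ T, x + (k+1) - (k+1) = x := fun x _ => by omega
  calc T.image (fun x => x + (k+1) - (k+1)) = T.image id := Finset.image_congr this
    _ = T := Finset.image_id

lemma fshift_inj (k : ℕ) : ∀ v w : Finset ℕ, fshift k v = fshift k w → v = w := by
  intro v w h
  rw [← fshift_recover k v, ← fshift_recover k w, h]

lemma fshift_insert (k j : ℕ) (T : Finset ℕ) :
    fshift k (insert j T) = insert (j + (k+1)) (fshift k T) := by
  rw [fshift, fshift, Finset.image_insert, Finset.insert_comm]

lemma treeRel_fshift (k : ℕ) (T T' : Finset ℕ) :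
    treeRel (fshift k T) (fshift k T') ↔ treeRel T T' := by
  constructor
  · rintro ⟨j', hj'mem, hj'not, hlt, heq⟩
    have hjk : j' ≠ k := fun h => hj'not (by rw [h]; exact Finset.mem_insert_self k _)
    rw [fshift] at hj'mem
    rcases Finset.mem_insert.mp hj'mem with h | h
    · exact absurd h hjk
    rcases Finset.mem_image.mp h with ⟨j, hjT', rfl⟩
    refine ⟨j, hjT', ?_, ?_, ?_⟩
    · intro hjT
      exact hj'not (Finset.mem_insert.mpr (Or.inr (Finset.mem_image_of_mem _ hjT)))
    · intro i hiT
      have : i + (k+1) < j + (k+1) :=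
        hlt _ (Finset.mem_insert.mpr (Or.inr (Finset.mem_image_of_mem _ hiT)))
      omega
    · apply fshift_inj k
      rw [heq, fshift_insert]
  · rintro ⟨j, hjT', hjT, hlt, rfl⟩
    refine ⟨j + (k+1), ?_, ?_, ?_, ?_⟩
    · exact Finset.mem_insert.mpr (Or.inr (Finset.mem_image_of_mem _ (Finset.mem_insert_self j T)))
    · intro h
      rcases Finset.mem_insert.mp h with h | h
      · omega
      · rcases Finset.mem_image.mp h with ⟨m, hm, hme⟩
        have : m = j := by omega
        exact hjT (this ▸ hm)
    · intro i hi
      rcases Finset.mem_insert.mp hi with rfl | h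
      · omega
      · rcases Finset.mem_image.mp h with ⟨m, hm, rfl⟩
        have := hlt m hm; omega
    · rw [fshift_insert]

lemma adj_fshift (k : ℕ) : ∀ v w : Finset ℕ, treeGraph.Adj v w ↔ treeGraph.Adj (fshift k v) (fshift k w) := by
  intro v w
  show (v ≠ w ∧ _) ↔ (fshift k v ≠ fshift k w ∧ _)
  rw [treeRel_fshift, treeRel_fshift]
  constructor
  · rintro ⟨h1, h2⟩; exact ⟨fun h => h1 (fshift_inj k _ _ h), h2⟩
  · rintro ⟨h1, h2⟩; exact ⟨fun h => h1 (h ▸ rfl), h2⟩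

lemma mem_C {n k : ℕ} (hk : k < n) (T : Finset ℕ) :
    T ∈ ((Finset.range (n-1-k)).powerset).image (fshift k) ↔
      (k ∈ T ∧ T ⊆ Finset.range n ∧ ∀ j ∈ T, k ≤ j) := by
  constructor
  · rintro hT
    rcases Finset.mem_image.mp hT with ⟨S, hS, rfl⟩
    rw [Finset.mem_powerset] at hS
    refine ⟨Finset.mem_insert_self k _, ?_, ?_⟩
    · intro x hx
      rcases Finset.mem_insert.mp hx with rfl | h
      · exact Finset.mem_range.mpr hk
      · rcases Finset.mem_image.mp h with ⟨m, hm, rfl⟩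
        have := Finset.mem_range.mp (hS hm)
        exact Finset.mem_range.mpr (by omega)
    · intro j hj
      rcases Finset.mem_insert.mp hj with rfl | h
      · exact le_rfl
      · rcases Finset.mem_image.mp h with ⟨m, hm, rfl⟩; omega
  · rintro ⟨h1, h2, h3⟩
    refine Finset.mem_image.mpr ⟨(T.erase k).image (fun m => m - (k+1)), ?_, ?_⟩
    · rw [Finset.mem_powerset]
      intro x hx
      rcases Finset.mem_image.mp hx with ⟨m, hm, rfl⟩
      rcases Finset.mem_erase.mp hm with ⟨hmk, hmT⟩
      have := Finset.mem_range.mp (h2 hmT)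
      have := h3 m hmT
      exact Finset.mem_range.mpr (by omega)
    · rw [fshift, Finset.image_image]
      have heq : (T.erase k).image (fun m => m - (k+1) + (k+1)) = T.erase k := by
        have : ∀ x ∈ T.erase k, x - (k+1) + (k+1) = x := by
          intro x hx
          rcases Finset.mem_erase.mp hx with ⟨hxk, hxT⟩
          have := h3 x hxT; omega
        calc (T.erase k).image (fun m => m - (k+1) + (k+1)) = (T.erase k).image id :=
              Finset.image_congr this
          _ = T.erase k := Finset.image_id
      have hc : ((fun x => x + (k+1)) ∘ fun m => m - (k+1)) = fun m => m - (k+1) + (k+1) := rfl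
      rw [hc, heq, Finset.insert_erase h1]

lemma adj_empty (T : Finset ℕ) : treeGraph.Adj ∅ T ↔ ∃ k, T = {k} := by
  show (∅ ≠ T ∧ (treeRel ∅ T ∨ treeRel T ∅)) ↔ _
  constructor
  · rintro ⟨hne, h | h⟩
    · rcases h with ⟨k, _, _, _, rfl⟩
      exact ⟨k, rfl⟩
    · rcases h with ⟨k, hk, _⟩
      exact absurd hk (Finset.notMem_empty k)
  · rintro ⟨k, rfl⟩
    exact ⟨(Finset.singleton_ne_empty k).symm,
      Or.inl ⟨k, Finset.mem_singleton_self k, Finset.notMem_empty k,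
        fun j hj => absurd hj (Finset.notMem_empty j), rfl⟩⟩

lemma filt_powerset (n : ℕ) :
    ((Finset.range n).powerset).filter (fun T => treeGraph.Adj ∅ T)
      = (Finset.range n).image (fun k => ({k} : Finset ℕ)) := by
  ext T
  simp only [Finset.mem_filter, Finset.mem_powerset, Finset.mem_image, adj_empty,
    Finset.mem_range]
  constructor
  · rintro ⟨hsub, k, rfl⟩
    exact ⟨k, Finset.mem_range.mp (hsub (Finset.mem_singleton_self k)), rfl⟩
  · rintro ⟨k, hk, rfl⟩
    exact ⟨Finset.singleton_subset_iff.mpr (Finset.mem_range.mpr hk), k, rfl⟩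

lemma filt_erase (n : ℕ) :
    (((Finset.range n).powerset).erase ∅).filter (fun T => treeGraph.Adj ∅ T)
      = (Finset.range n).image (fun k => ({k} : Finset ℕ)) := by
  rw [← filt_powerset]
  ext T
  simp only [Finset.mem_filter, Finset.mem_erase]
  constructor
  · rintro ⟨⟨_, h⟩, h2⟩; exact ⟨h, h2⟩
  · rintro ⟨h, h2⟩
    rcases (adj_empty T).mp h2 with ⟨k, rfl⟩
    exact ⟨⟨Finset.singleton_ne_empty k, h⟩, h2⟩

lemma grundy (n : ℕ) : geo treeGraph ((Finset.range n).powerset) ∅ = n := by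
  induction n using Nat.strong_induction_on with
  | _ n ih =>
  rw [geo_def, dif_pos (by simp)]
  rw [Finset.erase_eq, ← Finset.erase_eq] at *
  have hval : ∀ k ∈ Finset.range n,
      geo treeGraph (((Finset.range n).powerset).erase ∅) {k} = n - 1 - k := by
    intro k hk
    have hk' : k < n := Finset.mem_range.mp hk
    have h1 : geo treeGraph (((Finset.range n).powerset).erase ∅) {k}
        = geo treeGraph (((Finset.range (n-1-k)).powerset).image (fshift k)) {k} := by
      apply geo_closed
      · intro T hT
        rcases (mem_C hk' T).mp hT with ⟨h1, h2, _⟩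
        refine Finset.mem_erase.mpr ⟨?_, Finset.mem_powerset.mpr h2⟩
        exact fun h => (h ▸ Finset.notMem_empty k) h1
      · intro v hv w hw hadj
        rcases (mem_C hk' v).mp hv with ⟨hv1, hv2, hv3⟩
        rcases Finset.mem_erase.mp hw with ⟨hwne, hwsub⟩
        rw [Finset.mem_powerset] at hwsub
        rcases hadj.2 with ⟨j, hjw, hjv, hlt, rfl⟩ | ⟨j, hjv, hjw, hlt, heq⟩
        · refine (mem_C hk' _).mpr ⟨Finset.mem_insert_of_mem hv1, hwsub, ?_⟩
          intro i hi
          rcases Finset.mem_insert.mp hi with rfl | h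
          · exact le_of_lt (hlt k hv1)
          · exact hv3 i h
        · -- v = insert j w
          have hkw : k ∈ w := by
            rcases Finset.mem_insert.mp (heq ▸ hv1) with rfl | h
            · exfalso
              rcases Finset.nonempty_iff_ne_empty.mpr hwne with ⟨i, hi⟩
              have h1 : i < k := hlt i hi
              have h2 : k ≤ i := hv3 i (heq ▸ Finset.mem_insert_of_mem hi)
              omega
            · exact h
          refine (mem_C hk' _).mpr ⟨hkw, hwsub, ?_⟩
          intro i hi
          exact hv3 i (heq ▸ Finset.mem_insert_of_mem hi)
      · exact (mem_C hk' _).mpr ⟨Finset.mem_singleton_self k,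
          Finset.singleton_subset_iff.mpr (Finset.mem_range.mpr hk'),
          fun j hj => le_of_eq (Finset.mem_singleton.mp hj).symm⟩
    have hsing : ({k} : Finset ℕ) = fshift k ∅ := by simp [fshift]
    rw [h1, hsing, geo_map treeGraph (fshift k) _ (fshift_inj k) (adj_fshift k)
      (by simp), ih _ (by omega)]
  rw [filt_erase]
  rw [Finset.image_image]
  have himg : (Finset.range n).image ((fun v => geo treeGraph (((Finset.range n).powerset).erase ∅) v) ∘ (fun k => ({k} : Finset ℕ)))
      = (Finset.range n).image (fun k => n - 1 - k) :=
    Finset.image_congr (fun k hk => hval k hk)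
  rw [himg]
  have hrange : (Finset.range n).image (fun k => n - 1 - k) = Finset.range n := by
    ext m
    simp only [Finset.mem_image, Finset.mem_range]
    constructor
    · rintro ⟨k, hk, rfl⟩; omega
    · intro hm; exact ⟨n - 1 - m, by omega, by omega⟩
  rw [hrange, mex_range]

/-- the Undirected Geography position consisting of the tree `t(n)`
(realized as the induced subgraph of `treeGraph` on the powerset of `range n`) with the
token on its root `∅` has Grundy value exactly `n`; moreover `t(n)` has exactly `2^n`
vertices and its root has degree `n`. -/
theorem stmt5 (n : ℕ) :
    geo treeGraph ((Finset.range n).powerset) ∅ = n ∧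
    ((Finset.range n).powerset).card = 2 ^ n ∧
    (((Finset.range n).powerset).filter (fun T => treeGraph.Adj ∅ T)).card = n := by
  refine ⟨grundy n, ?_, ?_⟩
  · rw [Finset.card_powerset, Finset.card_range]
  · rw [filt_powerset, Finset.card_image_of_injective _ (fun a b h => by
      simpa using h), Finset.card_range]
end

section
/- Let D be a finite directed graph with reduced undirected graph D', let (x,y) be an arc of D, and let a, a₀, b, c, c₀, d, d₀, f be the gadget vertices of this arc in D'. Let K be the induced subgraph of D' on any vertex subset that excludes y but includes all of a, a₀, b, c, c₀, d, d₀, f (the vertex x and all other vertices of D' may or may not belong to K). Then the Undirected Geography Grundy value satisfies g(K, d) ∈ {2, 3}. -/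
/-- Vertices of the reduced undirected graph `D'` of a directed graph `D` on `V`:
original vertices (`orig`), one pendant vertex per original vertex (`pend`), and for
each arc `e` the eight gadget vertices `a, a₀, b, c, c₀, d, d₀, f`, encoded as
`gad e 0, …, gad e 7` in that order. -/
abbrev RedV (V : Type) : Type := V ⊕ V ⊕ ((V × V) × Fin 8)

def orig {V : Type} (v : V) : RedV V := Sum.inl v
def pend {V : Type} (v : V) : RedV V := Sum.inr (Sum.inl v)
def gad {V : Type} (e : V × V) (i : Fin 8) : RedV V := Sum.inr (Sum.inr (e, i))

/-- The internal edges of the gadget for one arc, with the names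
`a = 0, a₀ = 1, b = 2, c = 3, c₀ = 4, d = 5, d₀ = 6, f = 7`:
`{a,a₀}, {a,b}, {b,c}, {c,c₀}, {b,f}, {c,d}, {d,d₀}, {f,d}`. -/
def gadgetPairs : List (Fin 8 × Fin 8) :=
  [(0,1), (0,2), (2,3), (3,4), (2,7), (3,5), (5,6), (7,5)]

/-- Base edge relation of the reduced graph `D'` of the digraph with arc set `A`:
each vertex `v` gets a pendant edge `{v, v₀}`, and each arc `(x,y) ∈ A` is replaced
by its gadget, with edges `{x,a}` and `{d,y}` to the original vertices and the
internal gadget edges. -/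
def redRel {V : Type} [DecidableEq V] (A : Finset (V × V)) : RedV V → RedV V → Prop
  | Sum.inl v, Sum.inr (Sum.inl w) => v = w
  | Sum.inl v, Sum.inr (Sum.inr (e, i)) =>
      e ∈ A ∧ ((v = e.1 ∧ i = 0) ∨ (v = e.2 ∧ i = 5))
  | Sum.inr (Sum.inr (e, i)), Sum.inr (Sum.inr (e', j)) =>
      e = e' ∧ e ∈ A ∧ (i, j) ∈ gadgetPairs
  | _, _ => False

instance {V : Type} [DecidableEq V] (A : Finset (V × V)) : DecidableRel (redRel A) :=
  fun u w => by
    rcases u with v | v | ⟨e, i⟩ <;> rcases w with v' | v' | ⟨e', j⟩ <;>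
      simp only [redRel] <;> infer_instance

/-- The reduced undirected graph `D'` of the digraph with vertex type `V` and
arc set `A`. -/
def reduced {V : Type} [DecidableEq V] (A : Finset (V × V)) : SimpleGraph (RedV V) where
  Adj u w := u ≠ w ∧ (redRel A u w ∨ redRel A w u)
  symm := ⟨fun u w h => ⟨h.1.symm, h.2.symm⟩⟩
  loopless := ⟨fun u h => h.1 rfl⟩

instance {V : Type} [DecidableEq V] (A : Finset (V × V)) : DecidableRel (reduced A).Adj :=
  fun u w => inferInstanceAs (Decidable (u ≠ w ∧ (redRel A u w ∨ redRel A w u)))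
namespace Stmt6Aux

lemma mex_compl_nonempty (s : Finset ℕ) : {n : ℕ | n ∉ s}.Nonempty := by
  obtain ⟨n, hn⟩ := Infinite.exists_notMem_finset s
  exact ⟨n, hn⟩

lemma mex_not_mem (s : Finset ℕ) : mex s ∉ s :=
  Nat.sInf_mem (mex_compl_nonempty s)

lemma mex_eq_of {s : Finset ℕ} {n : ℕ} (h1 : n ∉ s) (h2 : ∀ m < n, m ∈ s) : mex s = n := by
  refine le_antisymm (Nat.sInf_le h1) ?_
  by_contra h
  push_neg at h
  exact mex_not_mem s (h2 _ h)

lemma mex_eq_zero {s : Finset ℕ} (h : 0 ∉ s) : mex s = 0 :=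
  mex_eq_of h (fun m hm => absurd hm (Nat.not_lt_zero m))

lemma mex_ne_zero {s : Finset ℕ} (h : 0 ∈ s) : mex s ≠ 0 :=
  fun h0 => mex_not_mem s (h0 ▸ h)

lemma geo_spec {V : Type} [DecidableEq V] (G : SimpleGraph V) [DecidableRel G.Adj]
    (S : Finset V) (s : V) (hs : s ∈ S) :
    geo G S s = mex (((S.erase s).filter (fun v => G.Adj s v)).image
      (fun v => geo G (S.erase s) v)) := by
  rw [geo]
  exact dif_pos hs

lemma geo_zero {V : Type} [DecidableEq V] (G : SimpleGraph V) [DecidableRel G.Adj]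
    {S : Finset V} {s : V} (hs : s ∈ S) (h : ∀ v ∈ S.erase s, ¬ G.Adj s v) :
    geo G S s = 0 := by
  rw [geo_spec _ _ _ hs, Finset.filter_eq_empty_iff.mpr h]
  exact mex_eq_zero (by simp)

lemma geo_ne_zero {V : Type} [DecidableEq V] (G : SimpleGraph V) [DecidableRel G.Adj]
    {S : Finset V} {s v : V} (hs : s ∈ S) (hv : v ∈ S.erase s) (hadj : G.Adj s v)
    (h0 : geo G (S.erase s) v = 0) : geo G S s ≠ 0 := by
  rw [geo_spec _ _ _ hs]
  exact mex_ne_zero (Finset.mem_image.mpr ⟨v, Finset.mem_filter.mpr ⟨hv, hadj⟩, h0⟩)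

end Stmt6Aux
namespace Stmt6Aux

lemma gad_inj {V : Type} {e e' : V × V} {i j : Fin 8} :
    gad e i = gad e' j ↔ e = e' ∧ i = j := by
  simp [gad]

lemma gad_ne_orig {V : Type} {e : V × V} {i : Fin 8} {v : V} : gad e i ≠ orig v := by
  simp [gad, orig]

lemma orig_ne_gad {V : Type} {e : V × V} {i : Fin 8} {v : V} : orig v ≠ gad e i := by
  simp [gad, orig]

lemma pairs_ne : ∀ p ∈ gadgetPairs, p.1 ≠ p.2 := by decide

lemma adj_gad_iff {V : Type} [DecidableEq V] (A : Finset (V × V)) {x y : V}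
    (hxy : (x, y) ∈ A) (i : Fin 8) (w : RedV V) :
    (reduced A).Adj (gad (x, y) i) w ↔
      (∃ j : Fin 8, ((i, j) ∈ gadgetPairs ∨ (j, i) ∈ gadgetPairs) ∧ w = gad (x, y) j) ∨
      (i = 0 ∧ w = orig x) ∨ (i = 5 ∧ w = orig y) := by
  rcases w with v | v | ⟨e, j⟩
  · show (Sum.inr (Sum.inr ((x,y), i)) ≠ Sum.inl v ∧ _) ↔ _
    simp only [reduced, redRel, gad, orig, pend]
    constructor
    · rintro ⟨-, h | ⟨-, (⟨rfl, rfl⟩ | ⟨rfl, rfl⟩)⟩⟩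
      · exact absurd h id
      · exact Or.inr (Or.inl ⟨rfl, rfl⟩)
      · exact Or.inr (Or.inr ⟨rfl, rfl⟩)
    · rintro (⟨j, -, h⟩ | ⟨rfl, h⟩ | ⟨rfl, h⟩)
      · exact absurd h (by simp)
      · obtain rfl : v = x := by simpa using h
        exact ⟨by simp, Or.inr ⟨hxy, Or.inl ⟨rfl, rfl⟩⟩⟩
      · obtain rfl : v = y := by simpa using h
        exact ⟨by simp, Or.inr ⟨hxy, Or.inr ⟨rfl, rfl⟩⟩⟩
  · show (Sum.inr (Sum.inr ((x,y), i)) ≠ Sum.inr (Sum.inl v) ∧ _) ↔ _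
    simp only [reduced, redRel, gad, orig, pend]
    constructor
    · rintro ⟨-, h | h⟩ <;> exact absurd h id
    · rintro (⟨j, -, h⟩ | ⟨rfl, h⟩ | ⟨rfl, h⟩) <;> exact absurd h (by simp)
  · show (Sum.inr (Sum.inr ((x,y), i)) ≠ Sum.inr (Sum.inr (e, j)) ∧ _) ↔ _
    simp only [reduced, redRel, gad, orig, pend]
    constructor
    · rintro ⟨hne, ⟨rfl, -, h⟩ | ⟨rfl, -, h⟩⟩
      · exact Or.inl ⟨j, Or.inl h, rfl⟩
      · exact Or.inl ⟨j, Or.inr h, rfl⟩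
    · rintro (⟨j', (h | h), hw⟩ | ⟨-, h⟩ | ⟨-, h⟩)
      · obtain ⟨rfl, rfl⟩ : e = (x, y) ∧ j = j' := by
          simpa [eq_comm, and_comm] using hw
        exact ⟨fun hc => pairs_ne _ h (by simpa using hc), Or.inl ⟨rfl, hxy, h⟩⟩
      · obtain ⟨rfl, rfl⟩ : e = (x, y) ∧ j = j' := by
          simpa [eq_comm, and_comm] using hw
        exact ⟨fun hc => (pairs_ne _ h).symm (by simpa using hc), Or.inr ⟨rfl, hxy, h⟩⟩
      · exact absurd h (by simp)
      · exact absurd h (by simp)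

end Stmt6Aux
namespace Stmt6Aux

variable {V : Type} [DecidableEq V] {A : Finset (V × V)} {x y : V}

lemma adj0 (hxy : (x, y) ∈ A) (w : RedV V) :
    (reduced A).Adj (gad (x, y) 0) w ↔ w = gad (x, y) 1 ∨ w = gad (x, y) 2 ∨ w = orig x := by
  rw [adj_gad_iff A hxy]
  have key : ∀ j : Fin 8, ((0, j) ∈ gadgetPairs ∨ (j, 0) ∈ gadgetPairs) ↔ (j = 1 ∨ j = 2) := by
    decide
  constructor
  · rintro (⟨j, hj, rfl⟩ | ⟨hi, rfl⟩ | ⟨hi, rfl⟩) <;>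
      first
        | (rcases (key j).mp hj with rfl|rfl <;> tauto)
        | (exact absurd hi (by decide))
        | tauto
  · rintro (rfl|rfl|rfl) <;>
      first
        | (exact Or.inl ⟨_, (key _).mpr (by tauto), rfl⟩)
        | tauto

lemma adj1 (hxy : (x, y) ∈ A) (w : RedV V) :
    (reduced A).Adj (gad (x, y) 1) w ↔ w = gad (x, y) 0 := by
  rw [adj_gad_iff A hxy]
  have key : ∀ j : Fin 8, ((1, j) ∈ gadgetPairs ∨ (j, 1) ∈ gadgetPairs) ↔ (j = 0) := by
    decide
  constructor
  · rintro (⟨j, hj, rfl⟩ | ⟨hi, rfl⟩ | ⟨hi, rfl⟩) <;>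
      first
        | (rcases (key j).mp hj with rfl <;> tauto)
        | (exact absurd hi (by decide))
        | tauto
  · rintro (rfl) <;>
      first
        | (exact Or.inl ⟨_, (key _).mpr (by tauto), rfl⟩)
        | tauto

lemma adj2 (hxy : (x, y) ∈ A) (w : RedV V) :
    (reduced A).Adj (gad (x, y) 2) w ↔ w = gad (x, y) 0 ∨ w = gad (x, y) 3 ∨ w = gad (x, y) 7 := by
  rw [adj_gad_iff A hxy]
  have key : ∀ j : Fin 8, ((2, j) ∈ gadgetPairs ∨ (j, 2) ∈ gadgetPairs) ↔ (j = 0 ∨ j = 3 ∨ j = 7) := by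
    decide
  constructor
  · rintro (⟨j, hj, rfl⟩ | ⟨hi, rfl⟩ | ⟨hi, rfl⟩) <;>
      first
        | (rcases (key j).mp hj with rfl|rfl|rfl <;> tauto)
        | (exact absurd hi (by decide))
        | tauto
  · rintro (rfl|rfl|rfl) <;>
      first
        | (exact Or.inl ⟨_, (key _).mpr (by tauto), rfl⟩)
        | tauto

lemma adj3 (hxy : (x, y) ∈ A) (w : RedV V) :
    (reduced A).Adj (gad (x, y) 3) w ↔ w = gad (x, y) 2 ∨ w = gad (x, y) 4 ∨ w = gad (x, y) 5 := by
  rw [adj_gad_iff A hxy]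
  have key : ∀ j : Fin 8, ((3, j) ∈ gadgetPairs ∨ (j, 3) ∈ gadgetPairs) ↔ (j = 2 ∨ j = 4 ∨ j = 5) := by
    decide
  constructor
  · rintro (⟨j, hj, rfl⟩ | ⟨hi, rfl⟩ | ⟨hi, rfl⟩) <;>
      first
        | (rcases (key j).mp hj with rfl|rfl|rfl <;> tauto)
        | (exact absurd hi (by decide))
        | tauto
  · rintro (rfl|rfl|rfl) <;>
      first
        | (exact Or.inl ⟨_, (key _).mpr (by tauto), rfl⟩)
        | tauto

lemma adj4 (hxy : (x, y) ∈ A) (w : RedV V) :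
    (reduced A).Adj (gad (x, y) 4) w ↔ w = gad (x, y) 3 := by
  rw [adj_gad_iff A hxy]
  have key : ∀ j : Fin 8, ((4, j) ∈ gadgetPairs ∨ (j, 4) ∈ gadgetPairs) ↔ (j = 3) := by
    decide
  constructor
  · rintro (⟨j, hj, rfl⟩ | ⟨hi, rfl⟩ | ⟨hi, rfl⟩) <;>
      first
        | (rcases (key j).mp hj with rfl <;> tauto)
        | (exact absurd hi (by decide))
        | tauto
  · rintro (rfl) <;>
      first
        | (exact Or.inl ⟨_, (key _).mpr (by tauto), rfl⟩)
        | tauto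

lemma adj5 (hxy : (x, y) ∈ A) (w : RedV V) :
    (reduced A).Adj (gad (x, y) 5) w ↔ w = gad (x, y) 3 ∨ w = gad (x, y) 6 ∨ w = gad (x, y) 7 ∨ w = orig y := by
  rw [adj_gad_iff A hxy]
  have key : ∀ j : Fin 8, ((5, j) ∈ gadgetPairs ∨ (j, 5) ∈ gadgetPairs) ↔ (j = 3 ∨ j = 6 ∨ j = 7) := by
    decide
  constructor
  · rintro (⟨j, hj, rfl⟩ | ⟨hi, rfl⟩ | ⟨hi, rfl⟩) <;>
      first
        | (rcases (key j).mp hj with rfl|rfl|rfl <;> tauto)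
        | (exact absurd hi (by decide))
        | tauto
  · rintro (rfl|rfl|rfl|rfl) <;>
      first
        | (exact Or.inl ⟨_, (key _).mpr (by tauto), rfl⟩)
        | tauto

lemma adj6 (hxy : (x, y) ∈ A) (w : RedV V) :
    (reduced A).Adj (gad (x, y) 6) w ↔ w = gad (x, y) 5 := by
  rw [adj_gad_iff A hxy]
  have key : ∀ j : Fin 8, ((6, j) ∈ gadgetPairs ∨ (j, 6) ∈ gadgetPairs) ↔ (j = 5) := by
    decide
  constructor
  · rintro (⟨j, hj, rfl⟩ | ⟨hi, rfl⟩ | ⟨hi, rfl⟩) <;>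
      first
        | (rcases (key j).mp hj with rfl <;> tauto)
        | (exact absurd hi (by decide))
        | tauto
  · rintro (rfl) <;>
      first
        | (exact Or.inl ⟨_, (key _).mpr (by tauto), rfl⟩)
        | tauto

lemma adj7 (hxy : (x, y) ∈ A) (w : RedV V) :
    (reduced A).Adj (gad (x, y) 7) w ↔ w = gad (x, y) 2 ∨ w = gad (x, y) 5 := by
  rw [adj_gad_iff A hxy]
  have key : ∀ j : Fin 8, ((7, j) ∈ gadgetPairs ∨ (j, 7) ∈ gadgetPairs) ↔ (j = 2 ∨ j = 5) := by
    decide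
  constructor
  · rintro (⟨j, hj, rfl⟩ | ⟨hi, rfl⟩ | ⟨hi, rfl⟩) <;>
      first
        | (rcases (key j).mp hj with rfl|rfl <;> tauto)
        | (exact absurd hi (by decide))
        | tauto
  · rintro (rfl|rfl) <;>
      first
        | (exact Or.inl ⟨_, (key _).mpr (by tauto), rfl⟩)
        | tauto

end Stmt6Aux
namespace Stmt6Aux

variable {V : Type} [DecidableEq V] {A : Finset (V × V)} {x y : V}

lemma gad_ne {e : V × V} {i j : Fin 8} (h : i ≠ j) : gad e i ≠ gad e j :=
  fun hc => h (gad_inj.mp hc).2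

lemma mem_erase_gad {S : Finset (RedV V)} {e : V × V} {i j : Fin 8} (h : i ≠ j)
    (hm : gad e i ∈ S) : gad e i ∈ S.erase (gad e j) :=
  Finset.mem_erase.mpr ⟨gad_ne h, hm⟩

lemma not_mem_erase_self {α : Type*} [DecidableEq α] {S : Finset α} (a : α) :
    a ∉ S.erase a := Finset.notMem_erase a S

lemma not_mem_erase_of {α : Type*} [DecidableEq α] {S : Finset α} {a b : α}
    (h : a ∉ S) : a ∉ S.erase b := fun hc => h (Finset.mem_of_mem_erase hc)

lemma mex_singleton_zero : mex ({0} : Finset ℕ) = 1 := by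
  refine mex_eq_of (by decide) ?_
  intro m hm
  interval_cases m
  · decide

lemma mex_pair_zero_one : mex ({1, 0} : Finset ℕ) = 2 := by
  refine mex_eq_of (by decide) ?_
  intro m hm
  interval_cases m <;> decide

lemma mex_pair_zero_t {t : ℕ} (h0 : t ≠ 0) (h1 : t ≠ 1) : mex ({t, 0} : Finset ℕ) = 1 := by
  refine mex_eq_of ?_ ?_
  · simp only [Finset.mem_insert, Finset.mem_singleton]
    push_neg
    exact ⟨fun h => h1 h.symm, by norm_num⟩
  · intro m hm
    interval_cases m
    simp

/-- The value at `a₀ = ga 1` is `0` whenever `a = ga 0` is absent. -/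
lemma val_a0 (hxy : (x, y) ∈ A) {S : Finset (RedV V)} (h1 : gad (x, y) 1 ∈ S)
    (h0 : gad (x, y) 0 ∉ S) : geo (reduced A) S (gad (x, y) 1) = 0 := by
  refine geo_zero (G := reduced A) ?_ ?_
  · exact h1
  · intro v hv hadj
    rw [adj1 hxy] at hadj
    subst hadj
    exact h0 (Finset.mem_of_mem_erase hv)

/-- The value at `a = ga 0` is nonzero whenever `a` and `a₀` are present. -/
lemma val_a (hxy : (x, y) ∈ A) {S : Finset (RedV V)} (h0 : gad (x, y) 0 ∈ S)
    (h1 : gad (x, y) 1 ∈ S) : geo (reduced A) S (gad (x, y) 0) ≠ 0 := by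
  refine geo_ne_zero (G := reduced A) (v := gad (x, y) 1) ?_ ?_ ?_ ?_
  · exact h0
  · exact mem_erase_gad (by decide) h1
  · exact (adj0 hxy _).mpr (Or.inl rfl)
  · exact val_a0 hxy (mem_erase_gad (by decide) h1) (not_mem_erase_self _)

/-- The value at `c = ga 3` is `1` when `b = ga 2` and `d = ga 5` are absent. -/
lemma val_c_late (hxy : (x, y) ∈ A) {S : Finset (RedV V)} (h3 : gad (x, y) 3 ∈ S)
    (h4 : gad (x, y) 4 ∈ S) (h2 : gad (x, y) 2 ∉ S) (h5 : gad (x, y) 5 ∉ S) :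
    geo (reduced A) S (gad (x, y) 3) = 1 := by
  rw [geo_spec _ _ _ h3]
  have hfil : (S.erase (gad (x, y) 3)).filter (fun v => (reduced A).Adj (gad (x, y) 3) v)
      = {gad (x, y) 4} := by
    ext w
    simp only [Finset.mem_filter, Finset.mem_erase, Finset.mem_singleton, adj3 hxy]
    constructor
    · rintro ⟨⟨hne, hwS⟩, (rfl | rfl | rfl)⟩
      · exact absurd hwS h2
      · rfl
      · exact absurd hwS h5
    · rintro rfl
      exact ⟨⟨gad_ne (by decide), h4⟩, Or.inr (Or.inl rfl)⟩
  rw [hfil, Finset.image_singleton]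
  have hv4 : geo (reduced A) (S.erase (gad (x, y) 3)) (gad (x, y) 4) = 0 := by
    refine geo_zero (G := reduced A) ?_ ?_
    · exact mem_erase_gad (by decide) h4
    · intro v hv hadj
      rw [adj4 hxy] at hadj
      subst hadj
      exact (Finset.mem_erase.mp (Finset.mem_of_mem_erase hv)).1 rfl
  rw [hv4]
  exact mex_singleton_zero

/-- The value at `f = ga 7` is `0` when `b = ga 2` and `d = ga 5` are absent. -/
lemma val_f_late (hxy : (x, y) ∈ A) {S : Finset (RedV V)} (h7 : gad (x, y) 7 ∈ S)
    (h2 : gad (x, y) 2 ∉ S) (h5 : gad (x, y) 5 ∉ S) :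
    geo (reduced A) S (gad (x, y) 7) = 0 := by
  refine geo_zero (G := reduced A) ?_ ?_
  · exact h7
  · intro v hv hadj
    rw [adj7 hxy] at hadj
    rcases hadj with rfl | rfl
    · exact h2 (Finset.mem_of_mem_erase hv)
    · exact h5 (Finset.mem_of_mem_erase hv)

/-- Branch through `f`: the value at `b = ga 2` is `0` when `d = ga 5` and
`f = ga 7` are absent but `a, a₀, c, c₀` are present. -/
lemma val_b_f (hxy : (x, y) ∈ A) {S : Finset (RedV V)} (h0 : gad (x, y) 0 ∈ S)
    (h1 : gad (x, y) 1 ∈ S) (h3 : gad (x, y) 3 ∈ S)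
    (h4 : gad (x, y) 4 ∈ S) (h2 : gad (x, y) 2 ∈ S) (h5 : gad (x, y) 5 ∉ S)
    (h7 : gad (x, y) 7 ∉ S) : geo (reduced A) S (gad (x, y) 2) = 0 := by
  rw [geo_spec _ _ _ h2]
  refine mex_eq_zero ?_
  simp only [Finset.mem_image, Finset.mem_filter, Finset.mem_erase, not_exists]
  rintro v ⟨⟨⟨hne, hvS⟩, hadj⟩, hval⟩
  rw [adj2 hxy] at hadj
  rcases hadj with rfl | rfl | rfl
  · exact val_a hxy (Finset.mem_erase.mpr ⟨hne, hvS⟩) (mem_erase_gad (by decide) h1) hval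
  · have := val_c_late hxy (Finset.mem_erase.mpr ⟨hne, hvS⟩) (mem_erase_gad (by decide) h4)
      (not_mem_erase_self _) (not_mem_erase_of h5)
    omega
  · exact h7 hvS

/-- Branch through `f`: the value at `f = ga 7` is `1` when `d = ga 5` is absent
but `a, a₀, b, c, c₀` are present. -/
lemma val_f (hxy : (x, y) ∈ A) {S : Finset (RedV V)} (h0 : gad (x, y) 0 ∈ S)
    (h1 : gad (x, y) 1 ∈ S) (h2 : gad (x, y) 2 ∈ S) (h3 : gad (x, y) 3 ∈ S)
    (h4 : gad (x, y) 4 ∈ S) (h7 : gad (x, y) 7 ∈ S) (h5 : gad (x, y) 5 ∉ S) :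
    geo (reduced A) S (gad (x, y) 7) = 1 := by
  rw [geo_spec _ _ _ h7]
  have hfil : (S.erase (gad (x, y) 7)).filter (fun v => (reduced A).Adj (gad (x, y) 7) v)
      = {gad (x, y) 2} := by
    ext w
    simp only [Finset.mem_filter, Finset.mem_erase, Finset.mem_singleton, adj7 hxy]
    constructor
    · rintro ⟨⟨hne, hwS⟩, (rfl | rfl)⟩
      · rfl
      · exact absurd hwS h5
    · rintro rfl
      exact ⟨⟨gad_ne (by decide), h2⟩, Or.inl rfl⟩
  rw [hfil, Finset.image_singleton]
  have hv2 : geo (reduced A) (S.erase (gad (x, y) 7)) (gad (x, y) 2) = 0 :=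
    val_b_f hxy (mem_erase_gad (by decide) h0) (mem_erase_gad (by decide) h1)
      (mem_erase_gad (by decide) h3) (mem_erase_gad (by decide) h4)
      (mem_erase_gad (by decide) h2) (not_mem_erase_of h5) (not_mem_erase_self _)
  rw [hv2]
  exact mex_singleton_zero

/-- Branch through `c`: the value at `b = ga 2` is `1` or `2` when `c = ga 3`
and `d = ga 5` are absent but `a, a₀, f` are present. -/
lemma val_b_c (hxy : (x, y) ∈ A) {S : Finset (RedV V)} (h0 : gad (x, y) 0 ∈ S)
    (h1 : gad (x, y) 1 ∈ S) (h2 : gad (x, y) 2 ∈ S) (h7 : gad (x, y) 7 ∈ S)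
    (h3 : gad (x, y) 3 ∉ S) (h5 : gad (x, y) 5 ∉ S) :
    geo (reduced A) S (gad (x, y) 2) = 1 ∨ geo (reduced A) S (gad (x, y) 2) = 2 := by
  rw [geo_spec _ _ _ h2]
  have hfil : (S.erase (gad (x, y) 2)).filter (fun v => (reduced A).Adj (gad (x, y) 2) v)
      = {gad (x, y) 0, gad (x, y) 7} := by
    ext w
    simp only [Finset.mem_filter, Finset.mem_erase, Finset.mem_insert,
      Finset.mem_singleton, adj2 hxy]
    constructor
    · rintro ⟨⟨hne, hwS⟩, (rfl | rfl | rfl)⟩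
      · exact Or.inl rfl
      · exact absurd hwS h3
      · exact Or.inr rfl
    · rintro (rfl | rfl)
      · exact ⟨⟨gad_ne (by decide), h0⟩, Or.inl rfl⟩
      · exact ⟨⟨gad_ne (by decide), h7⟩, Or.inr (Or.inr rfl)⟩
  rw [hfil, Finset.image_insert, Finset.image_singleton]
  have hv7 : geo (reduced A) (S.erase (gad (x, y) 2)) (gad (x, y) 7) = 0 :=
    val_f_late hxy (mem_erase_gad (by decide) h7) (not_mem_erase_self _)
      (not_mem_erase_of h5)
  have hv0 : geo (reduced A) (S.erase (gad (x, y) 2)) (gad (x, y) 0) ≠ 0 :=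
    val_a hxy (mem_erase_gad (by decide) h0) (mem_erase_gad (by decide) h1)
  rw [hv7]
  rcases eq_or_ne (geo (reduced A) (S.erase (gad (x, y) 2)) (gad (x, y) 0)) 1 with h | h
  · right
    rw [h]
    exact mex_pair_zero_one
  · left
    exact mex_pair_zero_t hv0 h

/-- Branch through `c`: the value at `c = ga 3` is `1` or `2` when `d = ga 5`
is absent but `a, a₀, b, c₀, f` are present. -/
lemma val_c (hxy : (x, y) ∈ A) {S : Finset (RedV V)} (h0 : gad (x, y) 0 ∈ S)
    (h1 : gad (x, y) 1 ∈ S) (h2 : gad (x, y) 2 ∈ S) (h3 : gad (x, y) 3 ∈ S)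
    (h4 : gad (x, y) 4 ∈ S) (h7 : gad (x, y) 7 ∈ S) (h5 : gad (x, y) 5 ∉ S) :
    geo (reduced A) S (gad (x, y) 3) = 1 ∨ geo (reduced A) S (gad (x, y) 3) = 2 := by
  rw [geo_spec _ _ _ h3]
  have hfil : (S.erase (gad (x, y) 3)).filter (fun v => (reduced A).Adj (gad (x, y) 3) v)
      = {gad (x, y) 2, gad (x, y) 4} := by
    ext w
    simp only [Finset.mem_filter, Finset.mem_erase, Finset.mem_insert,
      Finset.mem_singleton, adj3 hxy]
    constructor
    · rintro ⟨⟨hne, hwS⟩, (rfl | rfl | rfl)⟩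
      · exact Or.inl rfl
      · exact Or.inr rfl
      · exact absurd hwS h5
    · rintro (rfl | rfl)
      · exact ⟨⟨gad_ne (by decide), h2⟩, Or.inl rfl⟩
      · exact ⟨⟨gad_ne (by decide), h4⟩, Or.inr (Or.inl rfl)⟩
  rw [hfil, Finset.image_insert, Finset.image_singleton]
  have hv4 : geo (reduced A) (S.erase (gad (x, y) 3)) (gad (x, y) 4) = 0 := by
    refine geo_zero (G := reduced A) ?_ ?_
    · exact mem_erase_gad (by decide) h4
    · intro v hv hadj
      rw [adj4 hxy] at hadj
      subst hadj
      exact (Finset.mem_erase.mp (Finset.mem_of_mem_erase hv)).1 rfl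
  have hv2 := val_b_c hxy (mem_erase_gad (by decide) h0) (mem_erase_gad (by decide) h1)
    (mem_erase_gad (by decide) h2) (mem_erase_gad (by decide) h7)
    (not_mem_erase_self _) (not_mem_erase_of h5)
  rw [hv4]
  rcases hv2 with hv2 | hv2 <;> rw [hv2]
  · right
    exact mex_pair_zero_one
  · left
    exact mex_pair_zero_t (by norm_num) (by norm_num)

end Stmt6Aux
open Stmt6Aux in
/-- Wrong Way: let `(x,y)` be an arc of `D` and let `B` be any vertex subset
of `D'` that excludes `y` but includes all eight gadget vertices of this arc
(`x` and all other vertices may or may not belong to `B`).  Then on the induced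
subgraph `K = D'[B]`, the Grundy value with the token on `d` is `2` or `3`. -/
theorem stmt6 {V : Type} [DecidableEq V] (A : Finset (V × V)) (x y : V)
    (hxy : (x, y) ∈ A) (B : Finset (RedV V))
    (hy : orig y ∉ B) (hgad : ∀ i : Fin 8, gad (x, y) i ∈ B) :
    geo (reduced A) B (gad (x, y) 5) ∈ ({2, 3} : Set ℕ) := by
  rw [geo_spec _ _ _ (hgad 5)]
  have hfil : (B.erase (gad (x, y) 5)).filter (fun v => (reduced A).Adj (gad (x, y) 5) v)
      = {gad (x, y) 3, gad (x, y) 6, gad (x, y) 7} := by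
    ext w
    simp only [Finset.mem_filter, Finset.mem_erase, Finset.mem_insert,
      Finset.mem_singleton, adj5 hxy]
    constructor
    · rintro ⟨⟨hne, hwS⟩, (rfl | rfl | rfl | rfl)⟩
      · exact Or.inl rfl
      · exact Or.inr (Or.inl rfl)
      · exact Or.inr (Or.inr rfl)
      · exact absurd hwS hy
    · rintro (rfl | rfl | rfl)
      · exact ⟨⟨gad_ne (by decide), hgad 3⟩, Or.inl rfl⟩
      · exact ⟨⟨gad_ne (by decide), hgad 6⟩, Or.inr (Or.inl rfl)⟩
      · exact ⟨⟨gad_ne (by decide), hgad 7⟩, Or.inr (Or.inr (Or.inl rfl))⟩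
  rw [hfil, Finset.image_insert, Finset.image_insert, Finset.image_singleton]
  have h6 : geo (reduced A) (B.erase (gad (x, y) 5)) (gad (x, y) 6) = 0 := by
    refine geo_zero (G := reduced A) ?_ ?_
    · exact mem_erase_gad (by decide) (hgad 6)
    · intro v hv hadj
      rw [adj6 hxy] at hadj
      subst hadj
      exact (Finset.mem_erase.mp (Finset.mem_of_mem_erase hv)).1 rfl
  have h7 : geo (reduced A) (B.erase (gad (x, y) 5)) (gad (x, y) 7) = 1 :=
    val_f hxy (mem_erase_gad (by decide) (hgad 0)) (mem_erase_gad (by decide) (hgad 1))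
      (mem_erase_gad (by decide) (hgad 2)) (mem_erase_gad (by decide) (hgad 3))
      (mem_erase_gad (by decide) (hgad 4)) (mem_erase_gad (by decide) (hgad 7))
      (not_mem_erase_self _)
  have h3 := val_c hxy (mem_erase_gad (by decide) (hgad 0)) (mem_erase_gad (by decide) (hgad 1))
    (mem_erase_gad (by decide) (hgad 2)) (mem_erase_gad (by decide) (hgad 3))
    (mem_erase_gad (by decide) (hgad 4)) (mem_erase_gad (by decide) (hgad 7))
    (not_mem_erase_self _)
  rw [h6, h7]
  rcases h3 with h3 | h3 <;> rw [h3]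
  · have : mex ({1, 0, 1} : Finset ℕ) = 2 := by
      refine mex_eq_of (by decide) ?_
      intro m hm
      interval_cases m <;> decide
    rw [this]
    exact Or.inl rfl
  · have : mex ({2, 0, 1} : Finset ℕ) = 3 := by
      refine mex_eq_of (by decide) ?_
      intro m hm
      interval_cases m <;> decide
    rw [this]
    exact Or.inr rfl
end

section
/- Let D be a finite directed graph with reduced undirected graph D', let (x,y) be an arc of D, and let a, a₀, b, c, c₀, d, d₀, f be the gadget vertices of this arc in D'. Let K be the induced subgraph of D' on any vertex subset that includes x and all of a, a₀, b, c, c₀, d, d₀, f. If y belongs to K, then g(K − {x,a,b,c,d}, y) = 1 if and only if g(K − x, a) = 1. If y does not belong to K, then g(K − x, a) = 2. -/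
lemma mex_notMem (s : Finset ℕ) : mex s ∉ s := by
  have hne : {n : ℕ | n ∉ s}.Nonempty := by
    obtain ⟨n, hn⟩ := Infinite.exists_notMem_finset s
    exact ⟨n, hn⟩
  exact Nat.sInf_mem hne

lemma mex_eq (s : Finset ℕ) (n : ℕ) (h1 : n ∉ s) (h2 : ∀ m < n, m ∈ s) : mex s = n := by
  refine le_antisymm (Nat.sInf_le h1) (le_of_not_gt fun h => ?_)
  exact mex_notMem s (h2 _ h)

lemma geo_eval {V : Type} [DecidableEq V] (G : SimpleGraph V) [DecidableRel G.Adj]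
    (A : Finset V) (s : V) (h : s ∈ A) :
    geo G A s =
      mex (((A.erase s).filter (fun v => G.Adj s v)).image (fun v => geo G (A.erase s) v)) := by
  rw [geo, dif_pos h]
lemma gp_ne : ∀ i j : Fin 8, (i, j) ∈ gadgetPairs → i ≠ j := by decide

lemma gad_adj_iff {V : Type} [DecidableEq V] (A : Finset (V × V)) (e : V × V)
    (he : e ∈ A) (i : Fin 8) (v : RedV V) :
    (reduced A).Adj (gad e i) v ↔
      ((i = 0 ∧ v = orig e.1) ∨ (i = 5 ∧ v = orig e.2) ∨
       (∃ j : Fin 8, ((i, j) ∈ gadgetPairs ∨ (j, i) ∈ gadgetPairs) ∧ v = gad e j)) := by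
  rcases v with u | u | ⟨e', j⟩ <;>
    simp [reduced, redRel, gad, orig, pend, he]
  · constructor
    · rintro (⟨h1, h2⟩ | ⟨h1, h2⟩)
      · exact Or.inl ⟨h2, h1⟩
      · exact Or.inr ⟨h2, h1⟩
    · rintro (⟨h1, h2⟩ | ⟨h1, h2⟩)
      · exact Or.inl ⟨h2, h1⟩
      · exact Or.inr ⟨h2, h1⟩
  · constructor
    · rintro ⟨hne, (⟨h1, h2⟩ | ⟨h1, h2, h3⟩)⟩
      · exact ⟨Or.inl h2, h1.symm⟩
      · exact ⟨Or.inr h3, h1⟩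
    · rintro ⟨(hp | hp), he'⟩
      · exact ⟨fun _ h => gp_ne _ _ hp h, Or.inl ⟨he'.symm, hp⟩⟩
      · exact ⟨fun _ h => gp_ne _ _ hp h.symm, Or.inr ⟨he', he' ▸ he, hp⟩⟩
section Adj
variable {V : Type} [DecidableEq V] {A : Finset (V × V)} {e : V × V}

lemma adj0 (he : e ∈ A) (v : RedV V) : (reduced A).Adj (gad e 0) v ↔
    v = orig e.1 ∨ v = gad e 1 ∨ v = gad e 2 := by
  rw [gad_adj_iff A e he]
  have h : ∀ j : Fin 8, (((0:Fin 8), j) ∈ gadgetPairs ∨ (j, (0:Fin 8)) ∈ gadgetPairs) ↔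
      (j = 1 ∨ j = 2) := by decide
  simp [h, show ¬((0:Fin 8) = 5) by decide, or_and_right, exists_or]

lemma adj1 (he : e ∈ A) (v : RedV V) : (reduced A).Adj (gad e 1) v ↔ v = gad e 0 := by
  rw [gad_adj_iff A e he]
  have h : ∀ j : Fin 8, (((1:Fin 8), j) ∈ gadgetPairs ∨ (j, (1:Fin 8)) ∈ gadgetPairs) ↔
      (j = 0) := by decide
  simp [h, show ¬((1:Fin 8) = 0) by decide, show ¬((1:Fin 8) = 5) by decide]

lemma adj2 (he : e ∈ A) (v : RedV V) : (reduced A).Adj (gad e 2) v ↔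
    v = gad e 0 ∨ v = gad e 3 ∨ v = gad e 7 := by
  rw [gad_adj_iff A e he]
  have h : ∀ j : Fin 8, (((2:Fin 8), j) ∈ gadgetPairs ∨ (j, (2:Fin 8)) ∈ gadgetPairs) ↔
      (j = 0 ∨ j = 3 ∨ j = 7) := by decide
  simp [h, show ¬((2:Fin 8) = 0) by decide, show ¬((2:Fin 8) = 5) by decide,
    or_and_right, exists_or]

lemma adj3 (he : e ∈ A) (v : RedV V) : (reduced A).Adj (gad e 3) v ↔
    v = gad e 2 ∨ v = gad e 4 ∨ v = gad e 5 := by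
  rw [gad_adj_iff A e he]
  have h : ∀ j : Fin 8, (((3:Fin 8), j) ∈ gadgetPairs ∨ (j, (3:Fin 8)) ∈ gadgetPairs) ↔
      (j = 2 ∨ j = 4 ∨ j = 5) := by decide
  simp [h, show ¬((3:Fin 8) = 0) by decide, show ¬((3:Fin 8) = 5) by decide,
    or_and_right, exists_or]

lemma adj4 (he : e ∈ A) (v : RedV V) : (reduced A).Adj (gad e 4) v ↔ v = gad e 3 := by
  rw [gad_adj_iff A e he]
  have h : ∀ j : Fin 8, (((4:Fin 8), j) ∈ gadgetPairs ∨ (j, (4:Fin 8)) ∈ gadgetPairs) ↔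
      (j = 3) := by decide
  simp [h, show ¬((4:Fin 8) = 0) by decide, show ¬((4:Fin 8) = 5) by decide]

lemma adj5 (he : e ∈ A) (v : RedV V) : (reduced A).Adj (gad e 5) v ↔
    v = orig e.2 ∨ v = gad e 3 ∨ v = gad e 6 ∨ v = gad e 7 := by
  rw [gad_adj_iff A e he]
  have h : ∀ j : Fin 8, (((5:Fin 8), j) ∈ gadgetPairs ∨ (j, (5:Fin 8)) ∈ gadgetPairs) ↔
      (j = 3 ∨ j = 6 ∨ j = 7) := by decide
  simp [h, show ¬((5:Fin 8) = 0) by decide, or_and_right, exists_or]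

lemma adj6 (he : e ∈ A) (v : RedV V) : (reduced A).Adj (gad e 6) v ↔ v = gad e 5 := by
  rw [gad_adj_iff A e he]
  have h : ∀ j : Fin 8, (((6:Fin 8), j) ∈ gadgetPairs ∨ (j, (6:Fin 8)) ∈ gadgetPairs) ↔
      (j = 5) := by decide
  simp [h, show ¬((6:Fin 8) = 0) by decide, show ¬((6:Fin 8) = 5) by decide]

lemma adj7 (he : e ∈ A) (v : RedV V) : (reduced A).Adj (gad e 7) v ↔
    v = gad e 2 ∨ v = gad e 5 := by
  rw [gad_adj_iff A e he]
  have h : ∀ j : Fin 8, (((7:Fin 8), j) ∈ gadgetPairs ∨ (j, (7:Fin 8)) ∈ gadgetPairs) ↔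
      (j = 2 ∨ j = 5) := by decide
  simp [h, show ¬((7:Fin 8) = 0) by decide, show ¬((7:Fin 8) = 5) by decide,
    or_and_right, exists_or]

end Adj
lemma mex_ne (s : Finset ℕ) (n : ℕ) (h : n ∈ s) : mex s ≠ n :=
  fun e => mex_notMem s (e ▸ h)

lemma mex_empty : mex ∅ = 0 := mex_eq _ 0 (by simp) (by omega)

lemma mex_single (n : ℕ) (h : n ≠ 0) : mex {n} = 0 :=
  mex_eq _ 0 (by simp [Ne.symm h]) (by omega)

lemma mex_pair (n : ℕ) : mex {0, n} = if n = 1 then 2 else 1 := by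
  split
  · subst n; exact mex_eq _ 2 (by simp) (by intro m hm; interval_cases m <;> simp)
  · next h => exact mex_eq _ 1 (by simp [Ne.symm h]) (by intro m hm; interval_cases m; simp)

@[simp] lemma gad_eq_gad {V : Type} (e e' : V × V) (i j : Fin 8) :
    gad e i = gad e' j ↔ e = e' ∧ i = j := by simp [gad, Prod.ext_iff]

@[simp] lemma gad_ne_orig {V : Type} (e : V × V) (i : Fin 8) (v : V) :
    gad e i ≠ orig v := by simp [gad, orig]

@[simp] lemma orig_ne_gad {V : Type} (e : V × V) (i : Fin 8) (v : V) :
    orig v ≠ gad e i := by simp [gad, orig]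

@[simp] lemma orig_eq_orig {V : Type} (v w : V) : orig v = orig w ↔ v = w := by
  simp [orig]

lemma geo_notMem {V : Type} [DecidableEq V] (G : SimpleGraph V) [DecidableRel G.Adj]
    (A : Finset V) (s : V) (h : s ∉ A) : geo G A s = 0 := by
  rw [geo, dif_neg h]

/-- Correct Way: let `(x,y)` be an arc of `D` with gadget vertices
`a = gad 0, b = gad 2, c = gad 3, d = gad 5`, and let `B` be any vertex subset of `D'`
containing `x` and all eight gadget vertices of this arc, defining `K = D'[B]`.
If `y ∈ K` then `g(K − {x,a,b,c,d}, y) = 1 ↔ g(K − x, a) = 1`;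
if `y ∉ K` then `g(K − x, a) = 2`. -/
theorem stmt7 {V : Type} [DecidableEq V] (A : Finset (V × V)) (x y : V)
    (hxy : (x, y) ∈ A) (B : Finset (RedV V))
    (hx : orig x ∈ B) (hgad : ∀ i : Fin 8, gad (x, y) i ∈ B) :
    (orig y ∈ B →
      (geo (reduced A)
        (B \ {orig x, gad (x, y) 0, gad (x, y) 2, gad (x, y) 3, gad (x, y) 5})
        (orig y) = 1 ↔
       geo (reduced A) (B.erase (orig x)) (gad (x, y) 0) = 1)) ∧
    (orig y ∉ B →
      geo (reduced A) (B.erase (orig x)) (gad (x, y) 0) = 2) := by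
  classical
  -- value of a₀ = gad 1
  have hv1 : geo (reduced A) ((B.erase (orig x)).erase (gad (x, y) 0)) (gad (x, y) 1) = 0 := by
    rw [geo_eval _ _ _ (show gad (x, y) 1 ∈ ((B.erase (orig x)).erase (gad (x, y) 0)) by simp [hgad 1])]
    have hf : (((B.erase (orig x)).erase (gad (x, y) 0)).erase (gad (x, y) 1)).filter (fun v => (reduced A).Adj (gad (x, y) 1) v) = ∅ := by
      ext v
      simp only [Finset.mem_filter, Finset.notMem_empty, iff_false, not_and, adj1 hxy]
      rintro hv rfl
      simp at hv
    rw [hf]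
    simp [mex_empty]
  -- value of c₀ = gad 4 (after removing c = gad 3)
  have hv4 : geo (reduced A) ((((B.erase (orig x)).erase (gad (x, y) 0)).erase (gad (x, y) 2)).erase (gad (x, y) 3)) (gad (x, y) 4) = 0 := by
    rw [geo_eval _ _ _ (show gad (x, y) 4 ∈ ((((B.erase (orig x)).erase (gad (x, y) 0)).erase (gad (x, y) 2)).erase (gad (x, y) 3)) by simp [hgad 4])]
    have hf : (((((B.erase (orig x)).erase (gad (x, y) 0)).erase (gad (x, y) 2)).erase (gad (x, y) 3)).erase (gad (x, y) 4)).filter (fun v => (reduced A).Adj (gad (x, y) 4) v) = ∅ := by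
      ext v
      simp only [Finset.mem_filter, Finset.notMem_empty, iff_false, not_and, adj4 hxy]
      rintro hv rfl
      simp at hv
    rw [hf]
    simp [mex_empty]
  -- value of d₀ = gad 6 in S5
  have hv6 : geo (reduced A) (((((B.erase (orig x)).erase (gad (x, y) 0)).erase (gad (x, y) 2)).erase (gad (x, y) 3)).erase (gad (x, y) 5)) (gad (x, y) 6) = 0 := by
    rw [geo_eval _ _ _ (show gad (x, y) 6 ∈ (((((B.erase (orig x)).erase (gad (x, y) 0)).erase (gad (x, y) 2)).erase (gad (x, y) 3)).erase (gad (x, y) 5)) by simp [hgad 6])]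
    have hf : ((((((B.erase (orig x)).erase (gad (x, y) 0)).erase (gad (x, y) 2)).erase (gad (x, y) 3)).erase (gad (x, y) 5)).erase (gad (x, y) 6)).filter (fun v => (reduced A).Adj (gad (x, y) 6) v) = ∅ := by
      ext v
      simp only [Finset.mem_filter, Finset.notMem_empty, iff_false, not_and, adj6 hxy]
      rintro hv rfl
      simp at hv
    rw [hf]
    simp [mex_empty]
  -- value of f = gad 7 in S5
  have hv7' : geo (reduced A) (((((B.erase (orig x)).erase (gad (x, y) 0)).erase (gad (x, y) 2)).erase (gad (x, y) 3)).erase (gad (x, y) 5)) (gad (x, y) 7) = 0 := by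
    rw [geo_eval _ _ _ (show gad (x, y) 7 ∈ (((((B.erase (orig x)).erase (gad (x, y) 0)).erase (gad (x, y) 2)).erase (gad (x, y) 3)).erase (gad (x, y) 5)) by simp [hgad 7])]
    have hf : ((((((B.erase (orig x)).erase (gad (x, y) 0)).erase (gad (x, y) 2)).erase (gad (x, y) 3)).erase (gad (x, y) 5)).erase (gad (x, y) 7)).filter (fun v => (reduced A).Adj (gad (x, y) 7) v) = ∅ := by
      ext v
      simp only [Finset.mem_filter, Finset.notMem_empty, iff_false, not_and, adj7 hxy]
      rintro hv h
      rcases h with rfl | rfl <;> simp at hv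
    rw [hf]
    simp [mex_empty]
  -- value of d = gad 5 in S4
  have hv5 : geo (reduced A) ((((B.erase (orig x)).erase (gad (x, y) 0)).erase (gad (x, y) 2)).erase (gad (x, y) 3)) (gad (x, y) 5) =
      if geo (reduced A) (((((B.erase (orig x)).erase (gad (x, y) 0)).erase (gad (x, y) 2)).erase (gad (x, y) 3)).erase (gad (x, y) 5)) (orig y) = 1 then 2 else 1 := by
    rw [geo_eval _ _ _ (show gad (x, y) 5 ∈ ((((B.erase (orig x)).erase (gad (x, y) 0)).erase (gad (x, y) 2)).erase (gad (x, y) 3)) by simp [hgad 5])]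
    by_cases hY : (orig y : RedV V) ∈ (((((B.erase (orig x)).erase (gad (x, y) 0)).erase (gad (x, y) 2)).erase (gad (x, y) 3)).erase (gad (x, y) 5))
    · have hf : (((((B.erase (orig x)).erase (gad (x, y) 0)).erase (gad (x, y) 2)).erase (gad (x, y) 3)).erase (gad (x, y) 5)).filter (fun v => (reduced A).Adj (gad (x, y) 5) v) =
          {(orig y : RedV V), gad (x, y) 6, gad (x, y) 7} := by
        ext v
        simp only [Finset.mem_filter, Finset.mem_insert, Finset.mem_singleton, adj5 hxy]
        constructor
        · rintro ⟨hv, (rfl | rfl | rfl | rfl)⟩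
          · simp
          · simp at hv
          · simp
          · simp
        · rintro (rfl | rfl | rfl)
          · exact ⟨hY, Or.inl rfl⟩
          · exact ⟨by simp [hgad 6], by simp⟩
          · exact ⟨by simp [hgad 7], by simp⟩
      rw [hf]
      simp only [Finset.image_insert, Finset.image_singleton, hv6, hv7']
      have hcoll : (insert (geo (reduced A) (((((B.erase (orig x)).erase (gad (x, y) 0)).erase (gad (x, y) 2)).erase (gad (x, y) 3)).erase (gad (x, y) 5)) (orig y)) (insert 0 {0}) : Finset ℕ) =
          {0, geo (reduced A) (((((B.erase (orig x)).erase (gad (x, y) 0)).erase (gad (x, y) 2)).erase (gad (x, y) 3)).erase (gad (x, y) 5)) (orig y)} := by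
        ext n; simp; tauto
      rw [hcoll]
      exact mex_pair _
    · have hg0 : geo (reduced A) (((((B.erase (orig x)).erase (gad (x, y) 0)).erase (gad (x, y) 2)).erase (gad (x, y) 3)).erase (gad (x, y) 5)) (orig y) = 0 := geo_notMem _ _ _ hY
      have hf : (((((B.erase (orig x)).erase (gad (x, y) 0)).erase (gad (x, y) 2)).erase (gad (x, y) 3)).erase (gad (x, y) 5)).filter (fun v => (reduced A).Adj (gad (x, y) 5) v) =
          {(gad (x, y) 6 : RedV V), gad (x, y) 7} := by
        ext v
        simp only [Finset.mem_filter, Finset.mem_insert, Finset.mem_singleton, adj5 hxy]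
        constructor
        · rintro ⟨hv, (rfl | rfl | rfl | rfl)⟩
          · exact absurd hv hY
          · simp at hv
          · simp
          · simp
        · rintro (rfl | rfl)
          · exact ⟨by simp [hgad 6], by simp⟩
          · exact ⟨by simp [hgad 7], by simp⟩
      rw [hf]
      simp only [Finset.image_insert, Finset.image_singleton, hv6, hv7', hg0]
      exact mex_pair 0
  -- value of c = gad 3 in S3
  have hv3 : geo (reduced A) (((B.erase (orig x)).erase (gad (x, y) 0)).erase (gad (x, y) 2)) (gad (x, y) 3) =
      if geo (reduced A) (((((B.erase (orig x)).erase (gad (x, y) 0)).erase (gad (x, y) 2)).erase (gad (x, y) 3)).erase (gad (x, y) 5)) (orig y) = 1 then 1 else 2 := by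
    rw [geo_eval _ _ _ (show gad (x, y) 3 ∈ (((B.erase (orig x)).erase (gad (x, y) 0)).erase (gad (x, y) 2)) by simp [hgad 3])]
    have hf : ((((B.erase (orig x)).erase (gad (x, y) 0)).erase (gad (x, y) 2)).erase (gad (x, y) 3)).filter (fun v => (reduced A).Adj (gad (x, y) 3) v) =
        {(gad (x, y) 4 : RedV V), gad (x, y) 5} := by
      ext v
      simp only [Finset.mem_filter, Finset.mem_insert, Finset.mem_singleton, adj3 hxy]
      constructor
      · rintro ⟨hv, (rfl | rfl | rfl)⟩
        · simp at hv
        · simp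
        · simp
      · rintro (rfl | rfl)
        · exact ⟨by simp [hgad 4], by simp⟩
        · exact ⟨by simp [hgad 5], by simp⟩
    rw [hf]
    simp only [Finset.image_insert, Finset.image_singleton, hv4, hv5]
    by_cases hg : geo (reduced A) (((((B.erase (orig x)).erase (gad (x, y) 0)).erase (gad (x, y) 2)).erase (gad (x, y) 3)).erase (gad (x, y) 5)) (orig y) = 1
    · rw [if_pos hg, if_pos hg, mex_pair]
      norm_num
    · rw [if_neg hg, if_neg hg, mex_pair]
      norm_num
  -- value of d₀ = gad 6 in S7
  have hv6b : geo (reduced A) (((((B.erase (orig x)).erase (gad (x, y) 0)).erase (gad (x, y) 2)).erase (gad (x, y) 7)).erase (gad (x, y) 5)) (gad (x, y) 6) = 0 := by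
    rw [geo_eval _ _ _ (show gad (x, y) 6 ∈ (((((B.erase (orig x)).erase (gad (x, y) 0)).erase (gad (x, y) 2)).erase (gad (x, y) 7)).erase (gad (x, y) 5)) by simp [hgad 6])]
    have hf : ((((((B.erase (orig x)).erase (gad (x, y) 0)).erase (gad (x, y) 2)).erase (gad (x, y) 7)).erase (gad (x, y) 5)).erase (gad (x, y) 6)).filter (fun v => (reduced A).Adj (gad (x, y) 6) v) = ∅ := by
      ext v
      simp only [Finset.mem_filter, Finset.notMem_empty, iff_false, not_and, adj6 hxy]
      rintro hv rfl
      simp at hv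
    rw [hf]
    simp [mex_empty]
  -- d = gad 5 in S6 is nonzero
  have hv5b : geo (reduced A) ((((B.erase (orig x)).erase (gad (x, y) 0)).erase (gad (x, y) 2)).erase (gad (x, y) 7)) (gad (x, y) 5) ≠ 0 := by
    rw [geo_eval _ _ _ (show gad (x, y) 5 ∈ ((((B.erase (orig x)).erase (gad (x, y) 0)).erase (gad (x, y) 2)).erase (gad (x, y) 7)) by simp [hgad 5])]
    apply mex_ne
    refine Finset.mem_image.2 ⟨gad (x, y) 6, Finset.mem_filter.2 ⟨?_, ?_⟩, hv6b⟩
    · simp [hgad 6]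
    · rw [adj5 hxy]
      simp
  -- value of f = gad 7 in S3
  have hv7 : geo (reduced A) (((B.erase (orig x)).erase (gad (x, y) 0)).erase (gad (x, y) 2)) (gad (x, y) 7) = 0 := by
    rw [geo_eval _ _ _ (show gad (x, y) 7 ∈ (((B.erase (orig x)).erase (gad (x, y) 0)).erase (gad (x, y) 2)) by simp [hgad 7])]
    have hf : ((((B.erase (orig x)).erase (gad (x, y) 0)).erase (gad (x, y) 2)).erase (gad (x, y) 7)).filter (fun v => (reduced A).Adj (gad (x, y) 7) v) =
        {(gad (x, y) 5 : RedV V)} := by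
      ext v
      simp only [Finset.mem_filter, Finset.mem_singleton, adj7 hxy]
      constructor
      · rintro ⟨hv, (rfl | rfl)⟩
        · simp at hv
        · rfl
      · rintro rfl
        exact ⟨by simp [hgad 5], by simp⟩
    rw [hf]
    simp only [Finset.image_singleton]
    exact mex_single _ hv5b
  -- value of b = gad 2 in S2
  have hv2 : geo (reduced A) ((B.erase (orig x)).erase (gad (x, y) 0)) (gad (x, y) 2) =
      if geo (reduced A) (((((B.erase (orig x)).erase (gad (x, y) 0)).erase (gad (x, y) 2)).erase (gad (x, y) 3)).erase (gad (x, y) 5)) (orig y) = 1 then 2 else 1 := by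
    rw [geo_eval _ _ _ (show gad (x, y) 2 ∈ ((B.erase (orig x)).erase (gad (x, y) 0)) by simp [hgad 2])]
    have hf : (((B.erase (orig x)).erase (gad (x, y) 0)).erase (gad (x, y) 2)).filter (fun v => (reduced A).Adj (gad (x, y) 2) v) =
        {(gad (x, y) 3 : RedV V), gad (x, y) 7} := by
      ext v
      simp only [Finset.mem_filter, Finset.mem_insert, Finset.mem_singleton, adj2 hxy]
      constructor
      · rintro ⟨hv, (rfl | rfl | rfl)⟩
        · simp at hv
        · simp
        · simp
      · rintro (rfl | rfl)
        · exact ⟨by simp [hgad 3], by simp⟩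
        · exact ⟨by simp [hgad 7], by simp⟩
    rw [hf]
    simp only [Finset.image_insert, Finset.image_singleton, hv3, hv7]
    by_cases hg : geo (reduced A) (((((B.erase (orig x)).erase (gad (x, y) 0)).erase (gad (x, y) 2)).erase (gad (x, y) 3)).erase (gad (x, y) 5)) (orig y) = 1
    · rw [if_pos hg, if_pos hg]
      rw [show (insert 1 {(0:ℕ)} : Finset ℕ) = {0, 1} from Finset.pair_comm 1 0]
      rw [mex_pair]
      norm_num
    · rw [if_neg hg, if_neg hg]
      rw [show (insert 2 {(0:ℕ)} : Finset ℕ) = {0, 2} from Finset.pair_comm 2 0]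
      rw [mex_pair]
      norm_num
  -- value of a = gad 0 in S1
  have hv0 : geo (reduced A) (B.erase (orig x)) (gad (x, y) 0) =
      if geo (reduced A) (((((B.erase (orig x)).erase (gad (x, y) 0)).erase (gad (x, y) 2)).erase (gad (x, y) 3)).erase (gad (x, y) 5)) (orig y) = 1 then 1 else 2 := by
    rw [geo_eval _ _ _ (show gad (x, y) 0 ∈ (B.erase (orig x)) by simp [hgad 0])]
    have hf : ((B.erase (orig x)).erase (gad (x, y) 0)).filter (fun v => (reduced A).Adj (gad (x, y) 0) v) =
        {(gad (x, y) 1 : RedV V), gad (x, y) 2} := by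
      ext v
      simp only [Finset.mem_filter, Finset.mem_insert, Finset.mem_singleton, adj0 hxy]
      constructor
      · rintro ⟨hv, (rfl | rfl | rfl)⟩
        · simp at hv
        · simp
        · simp
      · rintro (rfl | rfl)
        · exact ⟨by simp [hgad 1], by simp⟩
        · exact ⟨by simp [hgad 2], by simp⟩
    rw [hf]
    simp only [Finset.image_insert, Finset.image_singleton, hv1, hv2]
    by_cases hg : geo (reduced A) (((((B.erase (orig x)).erase (gad (x, y) 0)).erase (gad (x, y) 2)).erase (gad (x, y) 3)).erase (gad (x, y) 5)) (orig y) = 1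
    · rw [if_pos hg, if_pos hg, mex_pair]
      norm_num
    · rw [if_neg hg, if_neg hg, mex_pair]
      norm_num
  have hT : B \ {orig x, gad (x, y) 0, gad (x, y) 2, gad (x, y) 3, gad (x, y) 5} =
      (((((B.erase (orig x)).erase (gad (x, y) 0)).erase (gad (x, y) 2)).erase (gad (x, y) 3)).erase (gad (x, y) 5)) := by
    ext v
    simp only [Finset.mem_sdiff, Finset.mem_insert, Finset.mem_singleton, Finset.mem_erase]
    tauto
  constructor
  · intro _
    rw [hT, hv0]
    by_cases hg : geo (reduced A) (((((B.erase (orig x)).erase (gad (x, y) 0)).erase (gad (x, y) 2)).erase (gad (x, y) 3)).erase (gad (x, y) 5)) (orig y) = 1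
    · simp [hg]
    · simp [hg]
  · intro hyB
    have hg : geo (reduced A) (((((B.erase (orig x)).erase (gad (x, y) 0)).erase (gad (x, y) 2)).erase (gad (x, y) 3)).erase (gad (x, y) 5)) (orig y) = 0 := by
      apply geo_notMem
      intro hm
      simp only [Finset.mem_erase] at hm
      exact hyB hm.2.2.2.2.2
    rw [hv0, if_neg (by rw [hg]; norm_num)]
end
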